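/- arXiv:2209.10575 — 3 statements merged into one kernel-verified Lean document; each statement's English description precedes it below -/
import Mathlib

section
/- Let R̂ : ℝ^p × ℝ_+^q → ℝ ∪ {+∞} be lower semicontinuous and level compact. Then the function (β,γ) ↦ L(β,γ) + R̂(β,γ) is level compact on ℝ^p × ℝ_+^q, and it attains its infimum: there exists (β*,γ*) ∈ ℝ^p × ℝ_+^q with L(β*,γ*) + R̂(β*,γ*) ≤ L(β,γ) + R̂(β,γ) for all (β,γ) ∈ ℝ^p × ℝ_+^q. -/
open Matrix Real Filter Topology Bornology
open scoped Pointwise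

noncomputable section

abbrev Vec (k : ℕ) : Type := Fin k → ℝ

/-- Euclidean norm of a vector. -/
def eNorm {ι : Type*} [Fintype ι] (x : ι → ℝ) : ℝ := Real.sqrt (∑ j, (x j) ^ 2)

/-- Squared Euclidean norm of a pair of vectors. -/
def sqnorm2 {p q : ℕ} (w : Vec p × Vec q) : ℝ :=
  (∑ j, (w.1 j) ^ 2) + ∑ j, (w.2 j) ^ 2

/-- ℓ²→ℓ² operator norm of a matrix (its largest singular value). -/
def opNorm {ι κ : Type*} [Fintype ι] [Fintype κ] (M : Matrix ι κ ℝ) : ℝ :=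
  sInf {c : ℝ | 0 ≤ c ∧ ∀ x : κ → ℝ, eNorm (M.mulVec x) ≤ c * eNorm x}

/-- Smallest eigenvalue of a symmetric matrix, via Rayleigh quotients. -/
def minEig {ι : Type*} [Fintype ι] (M : Matrix ι ι ℝ) : ℝ :=
  sInf {r : ℝ | ∃ x : ι → ℝ, eNorm x = 1 ∧ r = x ⬝ᵥ M.mulVec x}

/-- Largest eigenvalue of a symmetric matrix, via Rayleigh quotients. -/
def maxEig {ι : Type*} [Fintype ι] (M : Matrix ι ι ℝ) : ℝ :=
  sSup {r : ℝ | ∃ x : ι → ℝ, eNorm x = 1 ∧ r = x ⬝ᵥ M.mulVec x}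

/-- The log-barrier (perspective of the negative log). -/
def phiBar (μ : ℝ) {q : ℕ} (γ : Vec q) : EReal :=
  if μ = 0 then (if ∀ j, 0 ≤ γ j then (0 : EReal) else ⊤)
  else if 0 < μ then
    (if ∀ j, 0 < γ j then (((-μ) * ∑ j, Real.log (γ j / μ) : ℝ) : EReal) else ⊤)
  else ⊤

/-- The coupling function κ_η. -/
def kappaFun (η : ℝ) {p q : ℕ} (w : Vec p × Vec q) : ℝ := η / 2 * sqnorm2 w

/-- 1-coercivity: liminf of F(w)/‖w‖ as ‖w‖ → ∞ is positive. -/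
def OneCoercive {p q : ℕ} (R : Vec p × Vec q → EReal) : Prop :=
  ∃ c : ℝ, 0 < c ∧ ∃ r : ℝ, ∀ w : Vec p × Vec q,
    r ≤ Real.sqrt (sqnorm2 w) → ((c * Real.sqrt (sqnorm2 w) : ℝ) : EReal) ≤ R w

/-- Data of a linear mixed-effects model. -/
structure LMEData (m p q : ℕ) where
  n : Fin m → ℕ
  X : ∀ i, Matrix (Fin (n i)) (Fin p) ℝ
  Z : ∀ i, Matrix (Fin (n i)) (Fin q) ℝ
  y : ∀ i, Fin (n i) → ℝ
  lam : ∀ i, Matrix (Fin (n i)) (Fin (n i)) ℝ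

namespace LMEData

variable {m p q : ℕ}

/-- Ω_i(Γ) = Z_i Γ Z_iᵀ + Λ_i. -/
def Omega (D : LMEData m p q) (Γ : Matrix (Fin q) (Fin q) ℝ) (i : Fin m) :
    Matrix (Fin (D.n i)) (Fin (D.n i)) ℝ :=
  D.Z i * Γ * (D.Z i)ᵀ + D.lam i

/-- The marginal negative log-likelihood L_ML(β, Γ). -/
def LML (D : LMEData m p q) (β : Vec p) (Γ : Matrix (Fin q) (Fin q) ℝ) : ℝ :=
  ∑ i, ((1 : ℝ) / 2 * ((D.y i - D.X i *ᵥ β) ⬝ᵥ ((D.Omega Γ i)⁻¹ *ᵥ (D.y i - D.X i *ᵥ β)))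
    + (1 : ℝ) / 2 * Real.log (D.Omega Γ i).det)

/-- L(β, γ) = L_ML(β, Diag γ). -/
def L (D : LMEData m p q) (β : Vec p) (γ : Vec q) : ℝ := D.LML β (Matrix.diagonal γ)

/-- ν = max_i (1/2) μ_min(Λ_i)^{-2} σ_max(Z_i)^4. -/
def nu (D : LMEData m p q) : ℝ :=
  ⨆ i : Fin m, (1 : ℝ) / 2 * ((minEig (D.lam i)) ^ 2)⁻¹ * (opNorm (D.Z i)) ^ 4

/-- η̄ = ν m. -/
def etabar (D : LMEData m p q) : ℝ := D.nu * m

/-- L_{η,μ}((β,γ),(β̃,γ̃)) = L(β,γ) + φ_μ(γ) + κ_η(β−β̃,γ−γ̃). -/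
def Lrelax (D : LMEData m p q) (η μ : ℝ) (x w : Vec p × Vec q) : EReal :=
  ((D.L x.1 x.2 + kappaFun η (x - w) : ℝ) : EReal) + phiBar μ x.2

/-- The optimal value function u_{η,μ} (with extended-real values). -/
def uval (D : LMEData m p q) (η μ : ℝ) (w : Vec p × Vec q) : EReal :=
  ⨅ x : Vec p × Vec q, D.Lrelax η μ x w

/-- The (real-valued) optimal value function u_{η,μ}. -/
def ufun (D : LMEData m p q) (η μ : ℝ) (w : Vec p × Vec q) : ℝ := (D.uval η μ w).toReal

/-- Partial gradient ∇_β L. -/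
def gradB (D : LMEData m p q) (β : Vec p) (γ : Vec q) : Vec p :=
  fun j => fderiv ℝ (fun b => D.L b γ) β (Pi.single j 1)

/-- Partial gradient ∇_γ L. -/
def gradG (D : LMEData m p q) (β : Vec p) (γ : Vec q) : Vec q :=
  fun j => fderiv ℝ (fun g => D.L β g) γ (Pi.single j 1)

/-- The map G_{η,μ}. -/
def Gmap (D : LMEData m p q) (η μ : ℝ) (x : Vec p × Vec q × Vec q) (w : Vec p × Vec q) :
    Vec p × Vec q × Vec q :=
  (D.gradB x.1 x.2.1 + η • (x.1 - w.1),
   D.gradG x.1 x.2.1 + η • (x.2.1 - w.2) - x.2.2,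
   fun j => x.2.2 j * x.2.1 j - μ)

/-- Second-derivative block ∇²_{ββ} L. -/
def hessBB (D : LMEData m p q) (β : Vec p) (γ : Vec q) : Matrix (Fin p) (Fin p) ℝ :=
  Matrix.of fun j k => fderiv ℝ (fun b => D.gradB b γ j) β (Pi.single k 1)

/-- Second-derivative block ∇²_{γγ} L. -/
def hessGG (D : LMEData m p q) (β : Vec p) (γ : Vec q) : Matrix (Fin q) (Fin q) ℝ :=
  Matrix.of fun j k => fderiv ℝ (fun g => D.gradG β g j) γ (Pi.single k 1)

/-- Second-derivative block ∇²_{γβ} L (the p×q cross block). -/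
def hessGB (D : LMEData m p q) (β : Vec p) (γ : Vec q) : Matrix (Fin p) (Fin q) ℝ :=
  Matrix.of fun j k => fderiv ℝ (fun g => D.gradB β g j) γ (Pi.single k 1)

/-- Second-derivative block ∇²_{βγ} L (the q×p cross block). -/
def hessBG (D : LMEData m p q) (β : Vec p) (γ : Vec q) : Matrix (Fin q) (Fin p) ℝ :=
  Matrix.of fun j k => fderiv ℝ (fun b => D.gradG b γ j) β (Pi.single k 1)

end LMEData

/-- f(r, M) = (1/2)(rᵀM⁻¹r + ln det M). -/
def fRM {n : ℕ} (r : Vec n) (M : Matrix (Fin n) (Fin n) ℝ) : ℝ :=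
  (1 : ℝ) / 2 * (r ⬝ᵥ (M⁻¹ *ᵥ r) + Real.log M.det)


/-! ### Auxiliary lemmas for the proof -/

section AuxDet
open Matrix

lemma aux_dot_nonneg {n : ℕ} {M : Matrix (Fin n) (Fin n) ℝ} (hM : M.PosSemidef)
    (v : Fin n → ℝ) : 0 ≤ v ⬝ᵥ (M *ᵥ v) := by
  simpa using hM.dotProduct_mulVec_nonneg v

lemma aux_one_le_det_one_add {n : ℕ} {Q : Matrix (Fin n) (Fin n) ℝ} (hQ : Q.PosSemidef) :
    1 ≤ (1 + Q).det := by
  have hM : (1 + Q).IsHermitian := Matrix.isHermitian_one.add hQ.1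
  have hdet := hM.det_eq_prod_eigenvalues
  have h1 : ∀ i, 1 ≤ hM.eigenvalues i := by
    intro i
    have hv := hM.eigenvalues_eq i
    set v : Fin n → ℝ := ⇑(hM.eigenvectorBasis i) with hvdef
    have hnorm : ‖hM.eigenvectorBasis i‖ = 1 := hM.eigenvectorBasis.orthonormal.1 i
    have hvv : v ⬝ᵥ v = 1 := by
      have := real_inner_self_eq_norm_sq (hM.eigenvectorBasis i)
      rw [hnorm] at this
      simp only [one_pow] at this
      rw [← this, PiLp.inner_apply]
      simp [dotProduct, v, sq]
    have hQv : 0 ≤ v ⬝ᵥ (Q *ᵥ v) := aux_dot_nonneg hQ v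
    rw [hv]
    simp only [star_trivial]
    have : v ⬝ᵥ ((1 + Q) *ᵥ v) = v ⬝ᵥ v + v ⬝ᵥ (Q *ᵥ v) := by
      rw [add_mulVec, dotProduct_add, one_mulVec]
    simp only [RCLike.re_to_real]
    rw [this, hvv]
    linarith
  have hprod : (1:ℝ) ≤ ∏ i, hM.eigenvalues i := by
    have := Finset.prod_le_prod (s := Finset.univ) (f := fun _ : Fin n => (1:ℝ))
      (g := hM.eigenvalues) (fun i _ => zero_le_one) (fun i _ => h1 i)
    simpa using this
  calc (1:ℝ) ≤ ∏ i, hM.eigenvalues i := hprod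
    _ = (1 + Q).det := by rw [hdet]; norm_num

open scoped MatrixOrder in
lemma aux_det_le_det_add {n : ℕ} {A B : Matrix (Fin n) (Fin n) ℝ}
    (hA : A.PosDef) (hB : B.PosSemidef) : A.det ≤ (A + B).det := by
  have hAs := hA.posSemidef
  set S := CFC.sqrt A with hSdef
  have hS : S.PosSemidef := (CFC.sqrt_nonneg A).posSemidef
  have hSS : S * S = A := CFC.sqrt_mul_sqrt_self A hAs.nonneg
  have hdS : S.det ≠ 0 := by
    intro h
    have : A.det = 0 := by rw [← hSS, det_mul, h, mul_zero]
    exact hA.det_pos.ne' this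
  have hSinv : S⁻¹ᴴ = S⁻¹ := by rw [conjTranspose_nonsing_inv, hS.1.eq]
  have hQ : (S⁻¹ * B * S⁻¹).PosSemidef := by
    have := hB.conjTranspose_mul_mul_same S⁻¹
    rwa [hSinv] at this
  have hfact : A + B = S * (1 + (S⁻¹ * B * S⁻¹)) * S := by
    have h1 : S * S⁻¹ = 1 := mul_nonsing_inv S hdS.isUnit
    have h2 : S⁻¹ * S = 1 := nonsing_inv_mul S hdS.isUnit
    rw [mul_add, add_mul, mul_one, hSS]
    congr 1
    symm
    calc S * (S⁻¹ * B * S⁻¹) * S = (S * S⁻¹) * B * (S⁻¹ * S) := by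
          simp only [mul_assoc]
      _ = B := by rw [h1, h2, one_mul, mul_one]
  have hgoal : (A + B).det = A.det * (1 + (S⁻¹ * B * S⁻¹)).det := by
    rw [hfact, det_mul, det_mul, ← hSS, det_mul]
    ring
  rw [hgoal]
  exact le_mul_of_one_le_right hA.det_pos.le (aux_one_le_det_one_add hQ)

end AuxDet

section AuxLME
open Matrix

variable {m p q : ℕ} (D : LMEData m p q) (hlam : ∀ i, (D.lam i).PosDef)

lemma aux_ZdZ_psd {γ : Vec q} (hγ : ∀ j, 0 ≤ γ j) (i : Fin m) :
    (D.Z i * Matrix.diagonal γ * (D.Z i)ᵀ).PosSemidef := by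
  have hdiag : (Matrix.diagonal γ).PosSemidef :=
    Matrix.posSemidef_diagonal_iff.mpr hγ
  have := hdiag.mul_mul_conjTranspose_same (D.Z i)
  simpa using this

include hlam in
lemma aux_omega_posdef {γ : Vec q} (hγ : ∀ j, 0 ≤ γ j) (i : Fin m) :
    (D.Omega (Matrix.diagonal γ) i).PosDef :=
  Matrix.PosDef.posSemidef_add (aux_ZdZ_psd D hγ i) (hlam i)

include hlam in
lemma aux_det_omega_ge {γ : Vec q} (hγ : ∀ j, 0 ≤ γ j) (i : Fin m) :
    (D.lam i).det ≤ (D.Omega (Matrix.diagonal γ) i).det := by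
  have h := aux_det_le_det_add (hlam i) (aux_ZdZ_psd D hγ i)
  simpa [LMEData.Omega, add_comm] using h

include hlam in
lemma aux_L_lb {β : Vec p} {γ : Vec q} (hγ : ∀ j, 0 ≤ γ j) :
    ∑ i, (1 : ℝ) / 2 * Real.log (D.lam i).det ≤ D.L β γ := by
  unfold LMEData.L LMEData.LML
  apply Finset.sum_le_sum
  intro i _
  have hpd := aux_omega_posdef D hlam hγ i
  have hquad : 0 ≤ (D.y i - D.X i *ᵥ β) ⬝ᵥ
      ((D.Omega (Matrix.diagonal γ) i)⁻¹ *ᵥ (D.y i - D.X i *ᵥ β)) :=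
    aux_dot_nonneg (hpd.inv).posSemidef _
  have hlog : Real.log (D.lam i).det ≤ Real.log (D.Omega (Matrix.diagonal γ) i).det :=
    Real.log_le_log (hlam i).det_pos (aux_det_omega_ge D hlam hγ i)
  nlinarith

include hlam in
set_option linter.unusedSectionVars false in
lemma aux_L_contOn :
    ContinuousOn (fun x : Vec p × Vec q => D.L x.1 x.2)
      {x : Vec p × Vec q | ∀ j, 0 ≤ x.2 j} := by
  intro x hx
  apply ContinuousAt.continuousWithinAt
  have : (fun x : Vec p × Vec q => D.L x.1 x.2) = fun x : Vec p × Vec q =>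
      ∑ i, ((1 : ℝ) / 2 * ((D.y i - D.X i *ᵥ x.1) ⬝ᵥ
        ((D.Omega (Matrix.diagonal x.2) i)⁻¹ *ᵥ (D.y i - D.X i *ᵥ x.1)))
      + (1 : ℝ) / 2 * Real.log (D.Omega (Matrix.diagonal x.2) i).det) := rfl
  rw [this]
  apply tendsto_finset_sum
  intro i _
  have homega : Continuous fun z : Vec p × Vec q => D.Omega (Matrix.diagonal z.2) i := by
    unfold LMEData.Omega
    exact (((continuous_const.matrix_mul (continuous_snd.matrix_diagonal)).matrix_mul
      continuous_const).add continuous_const)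
  have hpd := aux_omega_posdef D hlam hx i
  have hdet0 : (D.Omega (Matrix.diagonal x.2) i).det ≠ 0 := hpd.det_pos.ne'
  have hinv : ContinuousAt (fun z : Vec p × Vec q => (D.Omega (Matrix.diagonal z.2) i)⁻¹) x := by
    apply ContinuousAt.comp
    · exact continuousAt_matrix_inv _
        (NormedRing.inverse_continuousAt (Units.mk0 _ hdet0))
    · exact homega.continuousAt
  have hr : Continuous fun z : Vec p × Vec q => D.y i - D.X i *ᵥ z.1 :=
    continuous_const.sub (continuous_const.matrix_mulVec continuous_fst)
  have hMr : ContinuousAt (fun z : Vec p × Vec q =>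
      (D.Omega (Matrix.diagonal z.2) i)⁻¹ *ᵥ (D.y i - D.X i *ᵥ z.1)) x := by
    apply continuousAt_pi.mpr
    intro j
    unfold Matrix.mulVec dotProduct
    apply tendsto_finset_sum
    intro k _
    exact ContinuousAt.mul
      (continuousAt_pi.mp (continuousAt_pi.mp hinv j) k)
      (((continuous_apply k).comp hr).continuousAt)
  have hquad : ContinuousAt (fun z : Vec p × Vec q =>
      (D.y i - D.X i *ᵥ z.1) ⬝ᵥ
        ((D.Omega (Matrix.diagonal z.2) i)⁻¹ *ᵥ (D.y i - D.X i *ᵥ z.1))) x := by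
    unfold dotProduct
    apply tendsto_finset_sum
    intro k _
    exact ContinuousAt.mul (((continuous_apply k).comp hr).continuousAt)
      (continuousAt_pi.mp hMr k)
  have hdetc : ContinuousAt (fun z : Vec p × Vec q =>
      (D.Omega (Matrix.diagonal z.2) i).det) x := homega.matrix_det.continuousAt
  have hlog : ContinuousAt (fun z : Vec p × Vec q =>
      Real.log (D.Omega (Matrix.diagonal z.2) i).det) x :=
    Filter.Tendsto.comp (Real.continuousAt_log hdet0) hdetc
  exact (hquad.const_mul _).add (hlog.const_mul _)

end AuxLME

section AuxTop

open scoped Classical in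
lemma aux_lsc_extend {E : Type*} [TopologicalSpace E] {s : Set E} (hs : IsClosed s)
    {f : E → EReal} (hf : LowerSemicontinuousOn f s) :
    LowerSemicontinuous (fun x => if x ∈ s then f x else ⊤) := by
  intro x y hy
  dsimp only at hy ⊢
  by_cases hx : x ∈ s
  · rw [if_pos hx] at hy
    have h1 := hf x hx y hy
    rw [eventually_nhdsWithin_iff] at h1
    filter_upwards [h1] with z hz
    by_cases hzs : z ∈ s
    · rw [if_pos hzs]; exact hz hzs
    · rw [if_neg hzs]; exact lt_of_lt_of_le hy le_top
  · have hmem : sᶜ ∈ 𝓝 x := hs.isOpen_compl.mem_nhds hx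
    rw [if_neg hx] at hy
    filter_upwards [hmem] with z hz
    rw [if_neg hz]
    exact hy

lemma aux_exists_real {x : EReal} (hb : x ≠ ⊥) (ht : x ≠ ⊤) : ∃ r : ℝ, x = (r : EReal) := by
  induction x using EReal.rec with
  | bot => exact absurd rfl hb
  | coe r => exact ⟨r, rfl⟩
  | top => exact absurd rfl ht

lemma aux_isClosed_sublevel {E : Type*} [TopologicalSpace E] {s : Set E} (hs : IsClosed s)
    {f : E → EReal} (hf : LowerSemicontinuousOn f s) (c : EReal) (hc : c < ⊤) :
    IsClosed {x : E | x ∈ s ∧ f x ≤ c} := by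
  classical
  have hlsc := aux_lsc_extend hs hf
  have hEq : {x : E | x ∈ s ∧ f x ≤ c} = (fun x => if x ∈ s then f x else ⊤) ⁻¹' Set.Iic c := by
    ext x
    constructor
    · rintro ⟨h1, h2⟩
      simp only [Set.mem_preimage, Set.mem_Iic]
      rw [if_pos h1]
      exact h2
    · intro hle
      simp only [Set.mem_preimage, Set.mem_Iic] at hle
      by_cases hxs : x ∈ s
      · rw [if_pos hxs] at hle
        exact ⟨hxs, hle⟩
      · rw [if_neg hxs] at hle
        exact absurd hle (not_le.mpr hc)
  rw [hEq]
  exact hlsc.isClosed_preimage _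

lemma aux_le_bot_of_forall {x : EReal} (h : ∀ n : ℕ, x ≤ ((-(n : ℝ) : ℝ) : EReal)) : x = ⊥ := by
  by_contra hx
  rcases eq_or_ne x ⊤ with hT | hT
  · have := h 1
    rw [hT] at this
    exact (EReal.coe_lt_top _).not_ge this
  · obtain ⟨r, hr⟩ := aux_exists_real hx hT
    obtain ⟨n, hn⟩ := exists_nat_gt (-r)
    have := h n
    rw [hr, EReal.coe_le_coe_iff] at this
    linarith

end AuxTop

/-- If R̂ is lsc and level compact on ℝ^p × ℝ_+^q then L + R̂ is level
compact there and attains its infimum. -/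
theorem penalized_likelihood_level_compact_and_attains
    {m p q : ℕ} (hm : 0 < m) (hp : 0 < p) (hq : 0 < q)
    (D : LMEData m p q) (hn : ∀ i, 0 < D.n i) (hlam : ∀ i, (D.lam i).PosDef)
    (Rhat : Vec p × Vec q → EReal)
    (hRbot : ∀ x, Rhat x ≠ ⊥)
    (hRlsc : LowerSemicontinuousOn Rhat {x : Vec p × Vec q | ∀ j, 0 ≤ x.2 j})
    (hRlc : ∀ c : ℝ, IsCompact {x : Vec p × Vec q | (∀ j, 0 ≤ x.2 j) ∧ Rhat x ≤ (c : EReal)}) :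
    (∀ c : ℝ, IsCompact {x : Vec p × Vec q |
        (∀ j, 0 ≤ x.2 j) ∧ (D.L x.1 x.2 : EReal) + Rhat x ≤ (c : EReal)}) ∧
    ∃ xs : Vec p × Vec q, (∀ j, 0 ≤ xs.2 j) ∧
      ∀ x : Vec p × Vec q, (∀ j, 0 ≤ x.2 j) →
        (D.L xs.1 xs.2 : EReal) + Rhat xs ≤ (D.L x.1 x.2 : EReal) + Rhat x := by
    classical
  set S : Set (Vec p × Vec q) := {x : Vec p × Vec q | ∀ j, 0 ≤ x.2 j} with hSdef
  have hSclosed : IsClosed S := by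
    have hEq : S = ⋂ j, {x : Vec p × Vec q | 0 ≤ x.2 j} := by
      ext x; simp [hSdef, Set.mem_iInter]
    rw [hEq]
    exact isClosed_iInter fun j =>
      isClosed_le continuous_const ((continuous_apply j).comp continuous_snd)
  set F : Vec p × Vec q → EReal := fun x => ((D.L x.1 x.2 : ℝ) : EReal) + Rhat x with hFdef
  set C : ℝ := ∑ i, (1:ℝ)/2 * Real.log (D.lam i).det with hCdef
  have hLlb : ∀ x : Vec p × Vec q, x ∈ S → C ≤ D.L x.1 x.2 := fun x hx => aux_L_lb D hlam hx
  have hFlsc : LowerSemicontinuousOn F S := by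
    apply LowerSemicontinuousOn.add'
    · exact (continuous_coe_real_ereal.comp_continuousOn
        (aux_L_contOn D hlam)).lowerSemicontinuousOn
    · exact hRlsc
    · intro x _
      exact EReal.continuousAt_add (Or.inl (EReal.coe_ne_top _)) (Or.inl (EReal.coe_ne_bot _))
  have hclosed : ∀ c : ℝ,
      IsClosed {x : Vec p × Vec q | (∀ j, 0 ≤ x.2 j) ∧ F x ≤ (c : EReal)} := by
    intro c
    exact aux_isClosed_sublevel hSclosed hFlsc (c : EReal) (EReal.coe_lt_top c)
  have hcompact : ∀ c : ℝ,
      IsCompact {x : Vec p × Vec q | (∀ j, 0 ≤ x.2 j) ∧ F x ≤ (c : EReal)} := by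
    intro c
    apply (hRlc (c - C)).of_isClosed_subset (hclosed c)
    rintro x ⟨h1, h2⟩
    refine ⟨h1, ?_⟩
    rcases eq_or_ne (Rhat x) ⊤ with hT | hT
    · exfalso
      rw [hFdef] at h2
      simp only [hT] at h2
      rw [EReal.add_top_of_ne_bot (EReal.coe_ne_bot _)] at h2
      exact (EReal.coe_lt_top c).not_ge h2
    · obtain ⟨r, hr⟩ := aux_exists_real (hRbot x) hT
      rw [hFdef] at h2
      simp only [hr] at h2
      rw [← EReal.coe_add, EReal.coe_le_coe_iff] at h2
      have hC := hLlb x h1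
      rw [hr, EReal.coe_le_coe_iff]
      linarith
  refine ⟨hcompact, ?_⟩
  by_cases hex : ∃ x0 : Vec p × Vec q, (∀ j, 0 ≤ x0.2 j) ∧ Rhat x0 ≠ ⊤
  · obtain ⟨x0, hx0S, hx0T⟩ := hex
    obtain ⟨r0, hr0⟩ := aux_exists_real (hRbot x0) hx0T
    set c0 : ℝ := D.L x0.1 x0.2 + r0 with hc0def
    have hFx0 : F x0 = (c0 : EReal) := by
      rw [hFdef]
      simp only [hr0]
      rw [← EReal.coe_add]
    have hx0K : x0 ∈ {x : Vec p × Vec q | (∀ j, 0 ≤ x.2 j) ∧ F x ≤ (c0 : EReal)} :=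
      ⟨hx0S, le_of_eq hFx0⟩
    set K := {x : Vec p × Vec q | (∀ j, 0 ≤ x.2 j) ∧ F x ≤ (c0 : EReal)} with hKdef
    set I : EReal := sInf (F '' K) with hIdef
    have hIle : I ≤ (c0 : EReal) :=
      le_trans (sInf_le (Set.mem_image_of_mem F hx0K)) (le_of_eq hFx0)
    have hIneTop : I ≠ ⊤ := (lt_of_le_of_lt hIle (EReal.coe_lt_top c0)).ne
    set c : ℕ → ℝ := fun n => if I = ⊥ then -(n : ℝ) else I.toReal + 1/(n+1) with hcdef
    have hc_anti : ∀ n : ℕ, c (n+1) ≤ c n := by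
      intro n
      by_cases hI : I = ⊥
      · simp only [hcdef, if_pos hI]
        push_cast
        linarith
      · simp only [hcdef, if_neg hI]
        have h1 : (0:ℝ) < (n:ℝ) + 1 := by positivity
        have h2 : (1:ℝ)/((n:ℝ)+1+1) ≤ 1/((n:ℝ)+1) := by
          apply one_div_le_one_div_of_le h1
          linarith
        push_cast
        linarith
    have hIlt : ∀ n : ℕ, I < ((c n : ℝ) : EReal) := by
      intro n
      by_cases hI : I = ⊥
      · rw [hI]; exact EReal.bot_lt_coe _
      · have hIr : ((I.toReal : ℝ) : EReal) = I := EReal.coe_toReal hIneTop hI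
        rw [← hIr]
        simp only [hcdef, if_neg hI]
        rw [EReal.coe_lt_coe_iff]
        have : (0:ℝ) < 1/((n:ℝ)+1) := by positivity
        linarith
    have hTne : ∀ n : ℕ,
        {x : Vec p × Vec q | (∀ j, 0 ≤ x.2 j) ∧ F x ≤ ((c n : ℝ) : EReal)}.Nonempty := by
      intro n
      obtain ⟨v, ⟨x, hxK, hvx⟩, hv⟩ := sInf_lt_iff.mp (hIlt n)
      exact ⟨x, hxK.1, le_of_lt (hvx ▸ hv)⟩
    have hTsub : ∀ n : ℕ,
        {x : Vec p × Vec q | (∀ j, 0 ≤ x.2 j) ∧ F x ≤ ((c (n+1) : ℝ) : EReal)} ⊆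
        {x : Vec p × Vec q | (∀ j, 0 ≤ x.2 j) ∧ F x ≤ ((c n : ℝ) : EReal)} := by
      intro n x hx
      exact ⟨hx.1, le_trans hx.2 (EReal.coe_le_coe_iff.mpr (hc_anti n))⟩
    obtain ⟨xs, hxs⟩ := IsCompact.nonempty_iInter_of_sequence_nonempty_isCompact_isClosed
      (fun n => {x : Vec p × Vec q | (∀ j, 0 ≤ x.2 j) ∧ F x ≤ ((c n : ℝ) : EReal)})
      hTsub hTne (hcompact (c 0)) (fun n => hclosed (c n))
    have hxsn : ∀ n : ℕ, xs ∈ {x : Vec p × Vec q | (∀ j, 0 ≤ x.2 j) ∧ F x ≤ ((c n : ℝ) : EReal)} :=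
      Set.mem_iInter.mp hxs
    have hxsS : ∀ j, 0 ≤ xs.2 j := (hxsn 0).1
    have hFxs_le : ∀ n : ℕ, F xs ≤ ((c n : ℝ) : EReal) := fun n => (hxsn n).2
    have hFI : F xs ≤ I := by
      by_cases hI : I = ⊥
      · have hb : F xs = ⊥ := by
          apply aux_le_bot_of_forall
          intro n
          have := hFxs_le n
          simpa only [hcdef, if_pos hI] using this
        rw [hb]
        exact bot_le
      · have hIr : ((I.toReal : ℝ) : EReal) = I := EReal.coe_toReal hIneTop hI
        have hFneTop : F xs ≠ ⊤ := (lt_of_le_of_lt (hFxs_le 0) (EReal.coe_lt_top _)).ne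
        rcases eq_or_ne (F xs) ⊥ with hFb | hFb
        · rw [hFb]; exact bot_le
        · obtain ⟨s, hs⟩ := aux_exists_real hFb hFneTop
          rw [hs, ← hIr, EReal.coe_le_coe_iff]
          by_contra hcon
          push_neg at hcon
          obtain ⟨n, hn⟩ := exists_nat_one_div_lt (sub_pos.mpr hcon)
          have hle := hFxs_le n
          rw [hs, EReal.coe_le_coe_iff] at hle
          simp only [hcdef, if_neg hI] at hle
          push_cast at hn hle
          linarith
    refine ⟨xs, hxsS, ?_⟩
    intro x hxS
    have hgoal : F xs ≤ F x := by
      by_cases hxc : F x ≤ (c0 : EReal)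
      · exact le_trans hFI (sInf_le (Set.mem_image_of_mem F ⟨hxS, hxc⟩))
      · push_neg at hxc
        exact le_trans hFI (le_trans hIle (le_of_lt hxc))
    exact hgoal
  · push_neg at hex
    refine ⟨(fun _ => 0, fun _ => 0), fun j => le_refl 0, ?_⟩
    intro x hxS
    have h1 : Rhat (fun _ => 0, fun _ => 0) = ⊤ := hex _ (fun j => le_refl 0)
    have h2 : Rhat x = ⊤ := hex x hxS
    rw [h1, h2, EReal.add_top_of_ne_bot (EReal.coe_ne_bot _),
      EReal.add_top_of_ne_bot (EReal.coe_ne_bot _)]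
end
end

section
/- The function (β,γ) ↦ L(β,γ) + (η̄/2)‖(β,γ)‖² is convex on ℝ^p × ℝ_+^q; that is, L is η̄-weakly convex on ℝ^p × ℝ_+^q. -/
open Matrix Real Filter Topology Bornology
open scoped Pointwise

noncomputable section

namespace WCaux

open Matrix Real


variable {n q : ℕ}

lemma sum_sq_pos {x : Fin n → ℝ} (hx : x ≠ 0) : 0 < ∑ j, x j ^ 2 := by
  rcases Function.ne_iff.mp hx with ⟨j, hj⟩
  have h1 : (0:ℝ) ≤ x j ^ 2 := sq_nonneg _
  have h2 : x j ^ 2 ≠ 0 := pow_ne_zero _ hj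
  exact Finset.sum_pos' (fun i _ => sq_nonneg _)
    ⟨j, Finset.mem_univ j, lt_of_le_of_ne h1 (Ne.symm h2)⟩

lemma symm_dot {M : Matrix (Fin n) (Fin n) ℝ} (hM : Mᵀ = M) (u v : Fin n → ℝ) :
    u ⬝ᵥ M *ᵥ v = v ⬝ᵥ M *ᵥ u := by
  rw [dotProduct_mulVec]
  nth_rewrite 1 [← hM]
  rw [vecMul_transpose, dotProduct_comm]

lemma herm_transpose {M : Matrix (Fin n) (Fin n) ℝ} (hM : M.IsHermitian) : Mᵀ = M := by
  have := hM.eq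
  rwa [conjTranspose_eq_transpose_of_trivial] at this

/-- generalized Cauchy-Schwarz for a psd bilinear form -/
lemma psd_cs {M : Matrix (Fin n) (Fin n) ℝ} (hsym : Mᵀ = M)
    (hpsd : ∀ z, 0 ≤ z ⬝ᵥ M *ᵥ z) (u v : Fin n → ℝ) :
    (u ⬝ᵥ M *ᵥ v) ^ 2 ≤ (u ⬝ᵥ M *ᵥ u) * (v ⬝ᵥ M *ᵥ v) := by
  have key : ∀ t : ℝ, 0 ≤ (v ⬝ᵥ M *ᵥ v) * (t * t) + (2 * (u ⬝ᵥ M *ᵥ v)) * t + u ⬝ᵥ M *ᵥ u := by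
    intro t
    have h0 := hpsd (u + t • v)
    have e1 : (u + t • v) ⬝ᵥ M *ᵥ (u + t • v)
        = u ⬝ᵥ M *ᵥ u + t * (u ⬝ᵥ M *ᵥ v) + t * (v ⬝ᵥ M *ᵥ u) + t * t * (v ⬝ᵥ M *ᵥ v) := by
      simp only [mulVec_add, mulVec_smul, dotProduct_add, add_dotProduct, smul_dotProduct,
        dotProduct_smul, smul_eq_mul]
      ring
    rw [e1, symm_dot hsym v u] at h0
    linarith
  have hd := discrim_le_zero key
  rw [discrim] at hd
  nlinarith [hd]

/-- quadratic form of inverse: bounds -/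
lemma inv_quad_bound {M : Matrix (Fin n) (Fin n) ℝ} (hM : M.PosDef) {μ : ℝ} (hμ : 0 < μ)
    (hray : ∀ x, μ * (∑ j, x j ^ 2) ≤ x ⬝ᵥ M *ᵥ x) (z : Fin n → ℝ) :
    0 ≤ z ⬝ᵥ M⁻¹ *ᵥ z ∧ z ⬝ᵥ M⁻¹ *ᵥ z ≤ μ⁻¹ * ∑ j, z j ^ 2 := by
  have hdet : IsUnit M.det := isUnit_iff_ne_zero.mpr (ne_of_gt hM.det_pos)
  set y := M⁻¹ *ᵥ z with hy
  have hMy : M *ᵥ y = z := by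
    rw [hy, mulVec_mulVec, mul_nonsing_inv _ hdet, one_mulVec]
  have e1 : z ⬝ᵥ M⁻¹ *ᵥ z = y ⬝ᵥ M *ᵥ y := by
    show z ⬝ᵥ y = _
    rw [← hMy, dotProduct_comm]
  have h1 : μ * (∑ j, y j ^ 2) ≤ z ⬝ᵥ M⁻¹ *ᵥ z := by rw [e1]; exact hray y
  have h0 : 0 ≤ z ⬝ᵥ M⁻¹ *ᵥ z := le_trans (by positivity) h1
  refine ⟨h0, ?_⟩
  have hcs : (z ⬝ᵥ y) ^ 2 ≤ (∑ j, z j ^ 2) * ∑ j, y j ^ 2 := by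
    simpa [dotProduct, pow_two] using Finset.sum_mul_sq_le_sq_mul_sq Finset.univ z y
  have hzy : z ⬝ᵥ M⁻¹ *ᵥ z = z ⬝ᵥ y := rfl
  rcases eq_or_lt_of_le h0 with h | h
  · rw [← h]; positivity
  · rw [hzy] at h h1 ⊢
    have hy2 : ∑ j, y j ^ 2 ≤ (z ⬝ᵥ y) / μ := by
      rw [le_div_iff₀ hμ]; linarith
    have hkey : (z ⬝ᵥ y) ^ 2 ≤ (∑ j, z j ^ 2) * ((z ⬝ᵥ y) / μ) :=
      le_trans hcs (mul_le_mul_of_nonneg_left hy2 (by positivity))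
    rw [div_eq_mul_inv] at hkey
    have h2 : (z ⬝ᵥ y) * (z ⬝ᵥ y) ≤ ((∑ j, z j ^ 2) * μ⁻¹) * (z ⬝ᵥ y) := by
      rw [pow_two] at hkey; linarith
    have h3 := (mul_le_mul_iff_left₀ h).mp h2
    linarith

/-- Fenchel-type inequality: 2⟨x,r⟩ - ⟨x,Mx⟩ ≤ ⟨r,M⁻¹r⟩ for M posdef. -/
lemma fenchel {M : Matrix (Fin n) (Fin n) ℝ} (hM : M.PosDef) (x r : Fin n → ℝ) :
    2 * (x ⬝ᵥ r) - x ⬝ᵥ M *ᵥ x ≤ r ⬝ᵥ M⁻¹ *ᵥ r := by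
  have hdet : IsUnit M.det := isUnit_iff_ne_zero.mpr (ne_of_gt hM.det_pos)
  have hsym : Mᵀ = M := herm_transpose hM.isHermitian
  set w := M⁻¹ *ᵥ r with hw
  have hMw : M *ᵥ w = r := by rw [hw, mulVec_mulVec, mul_nonsing_inv _ hdet, one_mulVec]
  have h0 : 0 ≤ (x - w) ⬝ᵥ M *ᵥ (x - w) := by
    have := hM.posSemidef.dotProduct_mulVec_nonneg (x - w)
    simpa using this
  have e1 : (x - w) ⬝ᵥ M *ᵥ (x - w)
      = (x ⬝ᵥ M *ᵥ x - x ⬝ᵥ r) - (w ⬝ᵥ M *ᵥ x - w ⬝ᵥ r) := by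
    rw [mulVec_sub, dotProduct_sub, sub_dotProduct, sub_dotProduct, hMw]
    ring
  have e2 : w ⬝ᵥ M *ᵥ x = x ⬝ᵥ r := by
    rw [symm_dot hsym w x, hMw]
  have e3 : w ⬝ᵥ r = r ⬝ᵥ M⁻¹ *ᵥ r := by rw [hw, dotProduct_comm]
  rw [e1, e2, e3] at h0
  linarith


variable {n : ℕ}

lemma spectral_real {M : Matrix (Fin n) (Fin n) ℝ} (hM : M.IsHermitian) :
    M = (hM.eigenvectorUnitary : Matrix (Fin n) (Fin n) ℝ) * diagonal hM.eigenvalues *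
      (star (hM.eigenvectorUnitary : Matrix (Fin n) (Fin n) ℝ)) := by
  have := hM.spectral_theorem
  rwa [RCLike.ofReal_real_eq_id, Function.id_comp] at this

lemma star_transpose_real (V : Matrix (Fin n) (Fin n) ℝ) : (star V)ᵀ = V := by
  rw [star_eq_conjTranspose, conjTranspose_eq_transpose_of_trivial, transpose_transpose]

lemma rayleigh_eigen {M : Matrix (Fin n) (Fin n) ℝ} (hM : M.IsHermitian) (x : Fin n → ℝ) :
    ∃ u : Fin n → ℝ, (∑ k, u k ^ 2 = ∑ k, x k ^ 2) ∧
      x ⬝ᵥ M *ᵥ x = ∑ k, hM.eigenvalues k * u k ^ 2 := by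
  set V : Matrix (Fin n) (Fin n) ℝ := (hM.eigenvectorUnitary : Matrix (Fin n) (Fin n) ℝ) with hV
  have hVmem := hM.eigenvectorUnitary.2
  have hVV : V * star V = 1 := (Matrix.mem_unitaryGroup_iff).mp hVmem
  have hxV : vecMul x V = star V *ᵥ x := by
    rw [← star_transpose_real V, vecMul_transpose, star_transpose_real]
  refine ⟨star V *ᵥ x, ?_, ?_⟩
  · have h : (star V *ᵥ x) ⬝ᵥ (star V *ᵥ x) = x ⬝ᵥ x := by
      nth_rewrite 1 [← hxV]
      rw [← dotProduct_mulVec, mulVec_mulVec, hVV, one_mulVec]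
    simpa [dotProduct, pow_two] using h
  · conv_lhs => rw [spectral_real hM]
    rw [← hV, ← mulVec_mulVec, ← mulVec_mulVec, dotProduct_mulVec x V, hxV]
    simp [dotProduct, mulVec_diagonal, pow_two]
    apply Finset.sum_congr rfl
    intro k _
    ring

lemma eNorm_sq {k : ℕ} (x : Fin k → ℝ) : (eNorm x) ^ 2 = ∑ j, x j ^ 2 :=
  Real.sq_sqrt (by positivity)

lemma eNorm_nonneg' {k : ℕ} (x : Fin k → ℝ) : 0 ≤ eNorm x := Real.sqrt_nonneg _

lemma minEig_spec {n : ℕ} (hn : 0 < n) {Λ : Matrix (Fin n) (Fin n) ℝ} (h : Λ.PosDef) :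
    0 < minEig Λ ∧ ∀ x : Fin n → ℝ, minEig Λ * (∑ j, x j ^ 2) ≤ x ⬝ᵥ Λ *ᵥ x := by
  haveI : Nonempty (Fin n) := ⟨⟨0, hn⟩⟩
  have hH : Λ.IsHermitian := h.isHermitian
  set lam0 : ℝ := Finset.univ.inf' Finset.univ_nonempty hH.eigenvalues with hlam0
  have hlam0pos : 0 < lam0 := by
    rw [hlam0, Finset.lt_inf'_iff]
    intro b _
    exact h.eigenvalues_pos b
  have hlow : ∀ x : Fin n → ℝ, lam0 * (∑ j, x j ^ 2) ≤ x ⬝ᵥ Λ *ᵥ x := by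
    intro x
    obtain ⟨u, hu, he⟩ := rayleigh_eigen hH x
    rw [he, ← hu, Finset.mul_sum]
    apply Finset.sum_le_sum
    intro k _
    exact mul_le_mul_of_nonneg_right (Finset.inf'_le _ (Finset.mem_univ k)) (sq_nonneg _)
  set S := {r : ℝ | ∃ x : Fin n → ℝ, eNorm x = 1 ∧ r = x ⬝ᵥ Λ.mulVec x} with hS
  have hmem : ∀ r ∈ S, lam0 ≤ r := by
    rintro r ⟨x, hx1, rfl⟩
    have hsum : ∑ j, x j ^ 2 = 1 := by
      have := eNorm_sq x
      rw [hx1] at this; simpa using this.symm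
    have := hlow x
    rw [hsum, mul_one] at this
    exact this
  have hbdd : BddBelow S := ⟨lam0, hmem⟩
  have hne : S.Nonempty := by
    set x0 : Fin n → ℝ := Pi.single (⟨0, hn⟩ : Fin n) (1:ℝ) with hx0
    refine ⟨x0 ⬝ᵥ Λ.mulVec x0, ⟨x0, ?_, rfl⟩⟩
    unfold eNorm
    have : ∑ j, x0 j ^ 2 = 1 := by
      simp [hx0, Pi.single_apply]
    rw [this, Real.sqrt_one]
  have hminEig_ge : lam0 ≤ minEig Λ := le_csInf hne hmem
  refine ⟨lt_of_lt_of_le hlam0pos hminEig_ge, ?_⟩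
  intro x
  rcases eq_or_ne x 0 with rfl | hx
  · simp
  · have hpos : 0 < ∑ j, x j ^ 2 := sum_sq_pos hx
    set t := Real.sqrt (∑ j, x j ^ 2) with ht
    have htpos : 0 < t := Real.sqrt_pos.mpr hpos
    have ht2 : t ^ 2 = ∑ j, x j ^ 2 := Real.sq_sqrt (le_of_lt hpos)
    have hmem1 : (t⁻¹ • x) ⬝ᵥ Λ.mulVec (t⁻¹ • x) ∈ S := by
      refine ⟨t⁻¹ • x, ?_, rfl⟩
      unfold eNorm
      have : ∑ j, (t⁻¹ • x) j ^ 2 = t⁻¹ ^ 2 * ∑ j, x j ^ 2 := by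
        simp [Finset.mul_sum, mul_pow]
      rw [this, Real.sqrt_mul (sq_nonneg _), Real.sqrt_sq (by positivity), ← ht]
      field_simp
    have hle := csInf_le hbdd hmem1
    have he : (t⁻¹ • x) ⬝ᵥ Λ.mulVec (t⁻¹ • x) = t⁻¹ ^ 2 * (x ⬝ᵥ Λ *ᵥ x) := by
      rw [mulVec_smul, dotProduct_smul, smul_dotProduct]
      simp [smul_eq_mul]; ring
    rw [he] at hle
    have := mul_le_mul_of_nonneg_right hle (le_of_lt (mul_pos htpos htpos))
    calc minEig Λ * ∑ j, x j ^ 2 = minEig Λ * (t * t) := by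
          rw [← ht2]; ring_nf
      _ ≤ t⁻¹ ^ 2 * (x ⬝ᵥ Λ *ᵥ x) * (t * t) := this
      _ = x ⬝ᵥ Λ *ᵥ x * (t⁻¹ ^ 2 * (t * t)) := by ring
      _ = x ⬝ᵥ Λ *ᵥ x := by
          have h1 : t⁻¹ ^ 2 * (t * t) = 1 := by
            rw [pow_two]
            field_simp
          rw [h1, mul_one]

lemma opNorm_spec {a b : ℕ} (Z : Matrix (Fin a) (Fin b) ℝ) :
    0 ≤ opNorm Z ∧ ∀ x, eNorm (Z *ᵥ x) ≤ opNorm Z * eNorm x := by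
  set C := {c : ℝ | 0 ≤ c ∧ ∀ x : Fin b → ℝ, eNorm (Z.mulVec x) ≤ c * eNorm x} with hC
  have hc0 : Real.sqrt (∑ i, ∑ j, Z i j ^ 2) ∈ C := by
    constructor
    · positivity
    · intro x
      have hb : ∀ i, (Z *ᵥ x) i ^ 2 ≤ (∑ j, Z i j ^ 2) * ∑ j, x j ^ 2 := by
        intro i
        simpa [Matrix.mulVec, dotProduct] using
          Finset.sum_mul_sq_le_sq_mul_sq Finset.univ (fun j => Z i j) x
      have h1 : ∑ i, (Z *ᵥ x) i ^ 2 ≤ (∑ i, ∑ j, Z i j ^ 2) * ∑ j, x j ^ 2 := by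
        rw [Finset.sum_mul]
        exact Finset.sum_le_sum fun i _ => hb i
      unfold eNorm
      rw [← Real.sqrt_mul (by positivity)]
      exact Real.sqrt_le_sqrt h1
  have hne : C.Nonempty := ⟨_, hc0⟩
  have h0 : 0 ≤ opNorm Z := Real.sInf_nonneg (fun c hc => hc.1)
  refine ⟨h0, fun x => ?_⟩
  rcases eq_or_ne x 0 with rfl | hx
  · simp [eNorm]
  · have hpos : 0 < eNorm x := by
      unfold eNorm
      exact Real.sqrt_pos.mpr (sum_sq_pos hx)
    have hlb : ∀ c ∈ C, eNorm (Z *ᵥ x) / eNorm x ≤ c := by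
      intro c hc
      rw [div_le_iff₀ hpos]
      exact hc.2 x
    have := le_csInf hne hlb
    rw [div_le_iff₀ hpos] at this
    exact this

lemma mulVec_single_col {a b : ℕ} (M : Matrix (Fin a) (Fin b) ℝ) (j : Fin b) :
    M *ᵥ (Pi.single j (1:ℝ)) = fun i => M i j := by
  funext i
  simp [Matrix.mulVec_single]

/-- Key trace bound: tr((Ω⁻¹ Z D_δ Zᵀ)²) ≤ (σ²/μ)² ‖δ‖². -/
lemma trace_bound {n' q : ℕ} {Ω : Matrix (Fin n') (Fin n') ℝ} (hΩ : Ω.PosDef)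
    {μ σ : ℝ} (hμ : 0 < μ)
    (hray : ∀ x, μ * (∑ j, x j ^ 2) ≤ x ⬝ᵥ Ω *ᵥ x)
    {Z : Matrix (Fin n') (Fin q) ℝ} (hZ : ∀ x, (∑ i, ((Z *ᵥ x) i) ^ 2) ≤ σ ^ 2 * ∑ j, x j ^ 2)
    (δ : Fin q → ℝ) :
    Matrix.trace ((Ω⁻¹ * (Z * diagonal δ * Zᵀ)) * (Ω⁻¹ * (Z * diagonal δ * Zᵀ)))
      ≤ (σ ^ 2 / μ) ^ 2 * ∑ j, δ j ^ 2 := by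
  set c : ℝ := σ ^ 2 / μ with hc
  have hcnn : 0 ≤ c := by positivity
  set P : Matrix (Fin q) (Fin q) ℝ := Zᵀ * Ω⁻¹ * Z with hP
  have hΩsym : Ωᵀ = Ω := herm_transpose hΩ.isHermitian
  have hΩisym : (Ω⁻¹)ᵀ = Ω⁻¹ := by
    rw [Matrix.transpose_nonsing_inv, hΩsym]
  have hPsym : Pᵀ = P := by
    rw [hP, Matrix.transpose_mul, Matrix.transpose_mul, hΩisym, Matrix.transpose_transpose,
      Matrix.mul_assoc]
  have hPsym' : ∀ j k, P j k = P k j := by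
    intro j k
    conv_lhs => rw [← hPsym]
    rfl
  have hquad : ∀ x, x ⬝ᵥ P *ᵥ x = (Z *ᵥ x) ⬝ᵥ Ω⁻¹ *ᵥ (Z *ᵥ x) := by
    intro x
    rw [hP, ← Matrix.mulVec_mulVec, ← Matrix.mulVec_mulVec, Matrix.dotProduct_mulVec x Zᵀ,
      Matrix.vecMul_transpose]
  have hP0 : ∀ x, 0 ≤ x ⬝ᵥ P *ᵥ x := by
    intro x
    rw [hquad]
    exact (inv_quad_bound hΩ hμ hray (Z *ᵥ x)).1
  have hPc : ∀ x, x ⬝ᵥ P *ᵥ x ≤ c * ∑ j, x j ^ 2 := by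
    intro x
    rw [hquad]
    calc (Z *ᵥ x) ⬝ᵥ Ω⁻¹ *ᵥ (Z *ᵥ x) ≤ μ⁻¹ * ∑ i, (Z *ᵥ x) i ^ 2 :=
          (inv_quad_bound hΩ hμ hray (Z *ᵥ x)).2
      _ ≤ μ⁻¹ * (σ ^ 2 * ∑ j, x j ^ 2) := by
          apply mul_le_mul_of_nonneg_left (hZ x) (by positivity)
      _ = c * ∑ j, x j ^ 2 := by rw [hc]; ring
  -- row norm bound
  have hPnorm : ∀ j, (∑ k, P j k ^ 2) ≤ c ^ 2 := by
    intro j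
    set e : Fin q → ℝ := Pi.single j (1:ℝ) with he
    set w : Fin q → ℝ := P *ᵥ e with hw
    have hwk : ∀ k, w k = P j k := by
      intro k
      rw [hw, he, mulVec_single_col]
      exact hPsym' k j
    have hww : w ⬝ᵥ w = ∑ k, P j k ^ 2 := by
      unfold dotProduct
      apply Finset.sum_congr rfl
      intro k _
      rw [hwk k, pow_two]
    have hcs := psd_cs hPsym hP0 e w
    have he1 : e ⬝ᵥ P *ᵥ w = w ⬝ᵥ w := by
      rw [symm_dot hPsym e w, ← hw]
    have he2 : e ⬝ᵥ P *ᵥ e ≤ c := by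
      have := hPc e
      have hs : ∑ k, e k ^ 2 = 1 := by simp [he, Pi.single_apply]
      rwa [hs, mul_one] at this
    have he3 : w ⬝ᵥ P *ᵥ w ≤ c * (w ⬝ᵥ w) := by
      have := hPc w
      have hs : ∑ k, w k ^ 2 = w ⬝ᵥ w := by
        unfold dotProduct
        exact Finset.sum_congr rfl fun k _ => pow_two (w k)
      rwa [hs] at this
    rw [he1] at hcs
    have h4 : (w ⬝ᵥ w) ^ 2 ≤ c * (c * (w ⬝ᵥ w)) := by
      calc (w ⬝ᵥ w) ^ 2 ≤ (e ⬝ᵥ P *ᵥ e) * (w ⬝ᵥ P *ᵥ w) := hcs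
        _ ≤ c * (c * (w ⬝ᵥ w)) := by
            apply mul_le_mul he2 he3 (hP0 w) hcnn
    rw [← hww]
    rcases le_or_gt (w ⬝ᵥ w) 0 with h5 | h5
    · calc w ⬝ᵥ w ≤ 0 := h5
        _ ≤ c ^ 2 := by positivity
    · nlinarith [h4, h5]
  -- trace rewriting
  set Δ : Matrix (Fin n') (Fin n') ℝ := Z * diagonal δ * Zᵀ with hΔ
  have htr1 : (Ω⁻¹ * Δ) * (Ω⁻¹ * Δ) = (Ω⁻¹ * (Z * diagonal δ)) * ((P * diagonal δ) * Zᵀ) := by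
    rw [hΔ, hP]
    simp only [Matrix.mul_assoc]
  have htr2 : ((P * diagonal δ) * Zᵀ) * (Ω⁻¹ * (Z * diagonal δ)) = (P * diagonal δ) * (P * diagonal δ) := by
    rw [hP]
    simp only [Matrix.mul_assoc]
  have htr : Matrix.trace ((Ω⁻¹ * Δ) * (Ω⁻¹ * Δ))
      = Matrix.trace ((P * diagonal δ) * (P * diagonal δ)) := by
    rw [htr1, Matrix.trace_mul_comm, htr2]
  rw [htr]
  have hent : Matrix.trace ((P * diagonal δ) * (P * diagonal δ))
      = ∑ j, ∑ k, δ j * δ k * P j k ^ 2 := by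
    set Q : Matrix (Fin q) (Fin q) ℝ := P * diagonal δ with hQdef
    have hQ : ∀ j k, Q j k = P j k * δ k := by
      intro j k
      rw [hQdef, Matrix.mul_diagonal]
    have : Matrix.trace (Q * Q) = ∑ j, ∑ k, Q j k * Q k j := by
      unfold Matrix.trace
      apply Finset.sum_congr rfl
      intro j _
      simp [Matrix.mul_apply]
    rw [this]
    apply Finset.sum_congr rfl
    intro j _
    apply Finset.sum_congr rfl
    intro k _
    rw [hQ j k, hQ k j, hPsym' k j]
    ring
  rw [hent]
  have hbound : ∑ j, ∑ k, δ j * δ k * P j k ^ 2 ≤ ∑ j, ∑ k, ((δ j ^ 2 + δ k ^ 2) / 2) * P j k ^ 2 := by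
    apply Finset.sum_le_sum
    intro j _
    apply Finset.sum_le_sum
    intro k _
    have h1 : δ j * δ k ≤ (δ j ^ 2 + δ k ^ 2) / 2 := by nlinarith [sq_nonneg (δ j - δ k)]
    exact mul_le_mul_of_nonneg_right h1 (sq_nonneg _)
  have hsplit : ∑ j, ∑ k, ((δ j ^ 2 + δ k ^ 2) / 2) * P j k ^ 2
      = ∑ j, δ j ^ 2 * ∑ k, P j k ^ 2 := by
    have hsq : ∀ j k, P j k ^ 2 = P k j ^ 2 := fun j k => by rw [hPsym' j k]
    have e1 : ∑ j, ∑ k, (δ k ^ 2 / 2) * P j k ^ 2 = ∑ j, ∑ k, (δ j ^ 2 / 2) * P j k ^ 2 := by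
      rw [Finset.sum_comm]
      apply Finset.sum_congr rfl
      intro j _
      apply Finset.sum_congr rfl
      intro k _
      rw [hsq j k]
    calc ∑ j, ∑ k, ((δ j ^ 2 + δ k ^ 2) / 2) * P j k ^ 2
        = ∑ j, ∑ k, ((δ j ^ 2 / 2) * P j k ^ 2 + (δ k ^ 2 / 2) * P j k ^ 2) := by
          apply Finset.sum_congr rfl; intro j _
          apply Finset.sum_congr rfl; intro k _
          ring
      _ = (∑ j, ∑ k, (δ j ^ 2 / 2) * P j k ^ 2) + ∑ j, ∑ k, (δ k ^ 2 / 2) * P j k ^ 2 := by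
          rw [← Finset.sum_add_distrib]
          apply Finset.sum_congr rfl; intro j _
          rw [← Finset.sum_add_distrib]
      _ = ∑ j, δ j ^ 2 * ∑ k, P j k ^ 2 := by
          rw [e1, ← Finset.sum_add_distrib]
          apply Finset.sum_congr rfl; intro j _
          rw [← Finset.sum_add_distrib, Finset.mul_sum]
          apply Finset.sum_congr rfl; intro k _
          ring
  have hfinal : ∑ j, δ j ^ 2 * ∑ k, P j k ^ 2 ≤ (∑ j, δ j ^ 2) * c ^ 2 := by
    rw [Finset.sum_mul]
    apply Finset.sum_le_sum
    intro j _
    exact mul_le_mul_of_nonneg_left (hPnorm j) (sq_nonneg _)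
  calc ∑ j, ∑ k, δ j * δ k * P j k ^ 2 ≤ ∑ j, ∑ k, ((δ j ^ 2 + δ k ^ 2) / 2) * P j k ^ 2 := hbound
    _ = ∑ j, δ j ^ 2 * ∑ k, P j k ^ 2 := hsplit
    _ ≤ (∑ j, δ j ^ 2) * c ^ 2 := hfinal
    _ = c ^ 2 * ∑ j, δ j ^ 2 := by ring

section Conj

variable {n : ℕ} {S : Matrix (Fin n) (Fin n) ℝ}

/-- conjugation of a diagonal matrix by the eigenvector unitary of `S`. -/
def conjd (hS : S.IsHermitian) (d : Fin n → ℝ) : Matrix (Fin n) (Fin n) ℝ :=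
  (hS.eigenvectorUnitary : Matrix (Fin n) (Fin n) ℝ) * diagonal d *
    star (hS.eigenvectorUnitary : Matrix (Fin n) (Fin n) ℝ)

lemma conjd_mul (hS : S.IsHermitian) (d₁ d₂ : Fin n → ℝ) :
    conjd hS d₁ * conjd hS d₂ = conjd hS (d₁ * d₂) := by
  unfold conjd
  have hVV' : star (hS.eigenvectorUnitary : Matrix (Fin n) (Fin n) ℝ) *
      (hS.eigenvectorUnitary : Matrix (Fin n) (Fin n) ℝ) = 1 :=
    (Matrix.mem_unitaryGroup_iff').mp hS.eigenvectorUnitary.2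
  calc _ = (hS.eigenvectorUnitary : Matrix (Fin n) (Fin n) ℝ) * diagonal d₁ *
        ((star (hS.eigenvectorUnitary : Matrix (Fin n) (Fin n) ℝ) *
          (hS.eigenvectorUnitary : Matrix (Fin n) (Fin n) ℝ)) * (diagonal d₂ *
          star (hS.eigenvectorUnitary : Matrix (Fin n) (Fin n) ℝ))) := by
        simp only [Matrix.mul_assoc]
    _ = _ := by
        rw [hVV', Matrix.one_mul, show (d₁ * d₂ : Fin n → ℝ) = fun i => d₁ i * d₂ i from rfl,
          ← Matrix.diagonal_mul_diagonal d₁ d₂]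
        simp only [Matrix.mul_assoc]

lemma conjd_one (hS : S.IsHermitian) : conjd hS 1 = 1 := by
  unfold conjd
  have h : diagonal (1 : Fin n → ℝ) = (1 : Matrix (Fin n) (Fin n) ℝ) := by
    ext i j
    by_cases hij : i = j <;> simp [Matrix.diagonal_apply, Matrix.one_apply, hij]
  rw [h, Matrix.mul_one]
  exact (Matrix.mem_unitaryGroup_iff).mp hS.eigenvectorUnitary.2

lemma conjd_eigen (hS : S.IsHermitian) : conjd hS hS.eigenvalues = S :=
  (spectral_real hS).symm

lemma conjd_linear (hS : S.IsHermitian) (d₁ d₂ : Fin n → ℝ) (t : ℝ) :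
    conjd hS (d₁ + t • d₂) = conjd hS d₁ + t • conjd hS d₂ := by
  unfold conjd
  have h : diagonal (d₁ + t • d₂) = diagonal d₁ + t • diagonal d₂ := by
    ext i j
    by_cases hij : i = j <;> simp [Matrix.diagonal_apply, hij]
  rw [h, Matrix.mul_add, Matrix.add_mul, Matrix.mul_smul, Matrix.smul_mul]

lemma trace_conjd (hS : S.IsHermitian) (d : Fin n → ℝ) :
    Matrix.trace (conjd hS d) = ∑ k, d k := by
  unfold conjd
  rw [Matrix.trace_mul_cycle,
    (Matrix.mem_unitaryGroup_iff').mp hS.eigenvectorUnitary.2, Matrix.one_mul,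
    Matrix.trace_diagonal]

lemma det_conjd (hS : S.IsHermitian) (d : Fin n → ℝ) :
    (conjd hS d).det = ∏ k, d k := by
  unfold conjd
  rw [Matrix.det_mul, Matrix.det_mul, Matrix.det_diagonal]
  have h1 : ((hS.eigenvectorUnitary : Matrix (Fin n) (Fin n) ℝ)).det *
      ((star (hS.eigenvectorUnitary : Matrix (Fin n) (Fin n) ℝ))).det = 1 := by
    rw [← Matrix.det_mul, (Matrix.mem_unitaryGroup_iff).mp hS.eigenvectorUnitary.2,
      Matrix.det_one]
  linear_combination (∏ k, d k) * h1

lemma conjd_inv (hS : S.IsHermitian) {d : Fin n → ℝ} (hd : ∀ k, d k ≠ 0) :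
    (conjd hS d)⁻¹ = conjd hS (fun k => (d k)⁻¹) := by
  apply Matrix.inv_eq_right_inv
  rw [conjd_mul]
  have : d * (fun k => (d k)⁻¹) = 1 := by
    funext k
    simp [Pi.mul_apply, mul_inv_cancel₀ (hd k)]
  rw [this, conjd_one]

end Conj

lemma posdef_of_ray {n : ℕ} {M : Matrix (Fin n) (Fin n) ℝ} (hsym : Mᵀ = M)
    {μ : ℝ} (hμ : 0 < μ) (hray : ∀ x, μ * (∑ j, x j ^ 2) ≤ x ⬝ᵥ M *ᵥ x) : M.PosDef := by
  refine Matrix.PosDef.of_dotProduct_mulVec_pos ?_ ?_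
  · show Mᴴ = M
    rwa [Matrix.conjTranspose_eq_transpose_of_trivial]
  · intro x hx
    have h1 : 0 < μ * ∑ j, x j ^ 2 := mul_pos hμ (sum_sq_pos hx)
    have h2 := hray x
    simp only [star_trivial]
    linarith

/-- The log-det weak-convexity inequality along a segment. -/
lemma logdet_ineq {n' q : ℕ} {A B : Matrix (Fin n') (Fin n') ℝ}
    {Z : Matrix (Fin n') (Fin q) ℝ} {δ : Fin q → ℝ}
    (hAB : B - A = Z * diagonal δ * Zᵀ)
    {μ σ : ℝ} (hμ : 0 < μ)
    (hZbd : ∀ x, (∑ i, ((Z *ᵥ x) i) ^ 2) ≤ σ ^ 2 * ∑ j, x j ^ 2)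
    (hsymA : Aᵀ = A) (hsymB : Bᵀ = B)
    (hrayA : ∀ x, μ * (∑ j, x j ^ 2) ≤ x ⬝ᵥ A *ᵥ x)
    (hrayB : ∀ x, μ * (∑ j, x j ^ 2) ≤ x ⬝ᵥ B *ᵥ x)
    {a b : ℝ} (ha : 0 ≤ a) (hb : 0 ≤ b) (hab : a + b = 1) :
    Real.log (a • A + b • B).det ≤ a * Real.log A.det + b * Real.log B.det
      + (σ ^ 2 / μ) ^ 2 * (∑ j, δ j ^ 2) / 2 * (a * b) := by
  have hA' : A.PosDef := posdef_of_ray hsymA hμ hrayA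
  have hB' : B.PosDef := posdef_of_ray hsymB hμ hrayB
  set Δ : Matrix (Fin n') (Fin n') ℝ := B - A with hΔdef
  have hΔsym : Δᵀ = Δ := by rw [hΔdef, Matrix.transpose_sub, hsymA, hsymB]
  set Mt : ℝ → Matrix (Fin n') (Fin n') ℝ := fun t => A + t • Δ with hMtdef
  have hMt0 : Mt 0 = A := by simp [hMtdef]
  have hMt1 : Mt 1 = B := by simp [hMtdef, hΔdef]
  have hMtb : Mt b = a • A + b • B := by
    have hb1 : a = 1 - b := by linarith
    rw [hMtdef]
    simp only
    rw [hΔdef, smul_sub, hb1, sub_smul, one_smul]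
    abel
  have hMtquad : ∀ t x, x ⬝ᵥ (Mt t) *ᵥ x
      = (1 - t) * (x ⬝ᵥ A *ᵥ x) + t * (x ⬝ᵥ B *ᵥ x) := by
    intro t x
    rw [hMtdef]
    simp only [Matrix.add_mulVec, Matrix.smul_mulVec, dotProduct_add, dotProduct_smul,
      smul_eq_mul, hΔdef, Matrix.sub_mulVec, dotProduct_sub]
    ring
  have hMtray : ∀ t ∈ Set.Icc (0:ℝ) 1, ∀ x, μ * (∑ j, x j ^ 2) ≤ x ⬝ᵥ (Mt t) *ᵥ x := by
    intro t ht x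
    rw [hMtquad]
    have h1 := hrayA x
    have h2 := hrayB x
    obtain ⟨ht0, ht1⟩ := ht
    nlinarith
  have hMtsym : ∀ t, (Mt t)ᵀ = Mt t := by
    intro t
    rw [hMtdef]
    simp only
    rw [Matrix.transpose_add, Matrix.transpose_smul, hΔsym, hsymA]
  have hMtpos : ∀ t ∈ Set.Icc (0:ℝ) 1, (Mt t).PosDef := fun t ht =>
    posdef_of_ray (hMtsym t) hμ (hMtray t ht)
  -- the whitening matrix W
  have hAdet : A.det ≠ 0 := ne_of_gt hA'.det_pos
  have hAunit : IsUnit A.det := isUnit_iff_ne_zero.mpr hAdet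
  have hAinvPD : (A⁻¹).PosDef := hA'.inv
  set W : Matrix (Fin n') (Fin n') ℝ :=
    conjd hAinvPD.isHermitian (fun k => Real.sqrt (hAinvPD.isHermitian.eigenvalues k)) with hWdef
  have hWW : W * W = A⁻¹ := by
    rw [hWdef, conjd_mul]
    conv_rhs => rw [← conjd_eigen hAinvPD.isHermitian]
    congr 1
    funext k
    exact Real.mul_self_sqrt (le_of_lt (hAinvPD.eigenvalues_pos k))
  have hWsym : Wᵀ = W := herm_transpose (by
    rw [hWdef]; unfold conjd; rw [star_eq_conjTranspose]
    exact isHermitian_mul_mul_conjTranspose _ (isHermitian_diagonal _))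
  have hWdet : W.det ≠ 0 := by
    intro h0
    have h1 : W.det * W.det = A⁻¹.det := by rw [← Matrix.det_mul, hWW]
    rw [h0, mul_zero] at h1
    have h2 : A⁻¹.det ≠ 0 := by
      have := hA'.inv.det_pos
      exact ne_of_gt this
    exact h2 h1.symm
  have hWunit : IsUnit W.det := isUnit_iff_ne_zero.mpr hWdet
  have hWiW : W⁻¹ * W = 1 := Matrix.nonsing_inv_mul _ hWunit
  have hWWi : W * W⁻¹ = 1 := Matrix.mul_nonsing_inv _ hWunit
  have hWAW : W * A * W = 1 := by
    have h1 : A = W⁻¹ * W⁻¹ := by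
      rw [← Matrix.mul_inv_rev, hWW, Matrix.nonsing_inv_nonsing_inv _ hAunit]
    rw [h1]
    calc W * (W⁻¹ * W⁻¹) * W = (W * W⁻¹) * (W⁻¹ * W) := by
          simp only [Matrix.mul_assoc]
      _ = 1 := by rw [hWWi, hWiW, Matrix.mul_one]
  set S : Matrix (Fin n') (Fin n') ℝ := W * Δ * W with hSdef
  have hSsym : Sᵀ = S := by
    rw [hSdef, Matrix.transpose_mul, Matrix.transpose_mul, hWsym, hΔsym, Matrix.mul_assoc]
  have hS : S.IsHermitian := by
    show Sᴴ = S
    rwa [Matrix.conjTranspose_eq_transpose_of_trivial]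
  set s : Fin n' → ℝ := hS.eigenvalues with hsdef
  have hWMW : ∀ t, W * (Mt t) * W = 1 + t • S := by
    intro t
    rw [hMtdef]
    simp only
    rw [Matrix.mul_add, Matrix.add_mul, hWAW, Matrix.mul_smul, Matrix.smul_mul, hSdef]
  -- positivity of 1 + t * s k on [0,1]
  have hcong : ∀ t, ∀ x, x ⬝ᵥ (W * Mt t * W) *ᵥ x = (W *ᵥ x) ⬝ᵥ (Mt t) *ᵥ (W *ᵥ x) := by
    intro t x
    rw [← Matrix.mulVec_mulVec, ← Matrix.mulVec_mulVec, Matrix.dotProduct_mulVec x W]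
    nth_rewrite 1 [← hWsym]
    rw [Matrix.vecMul_transpose]
  have hWxne : ∀ x : Fin n' → ℝ, x ≠ 0 → W *ᵥ x ≠ 0 := by
    intro x hx h0
    apply hx
    have h1 : W⁻¹ *ᵥ (W *ᵥ x) = x := by
      rw [Matrix.mulVec_mulVec, hWiW, Matrix.one_mulVec]
    rw [h0, Matrix.mulVec_zero] at h1
    exact h1.symm
  have hIPD : ∀ t ∈ Set.Icc (0:ℝ) 1, (1 + t • S).PosDef := by
    intro t ht
    rw [← hWMW t]
    refine Matrix.PosDef.of_dotProduct_mulVec_pos ?_ ?_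
    · show (W * Mt t * W)ᴴ = W * Mt t * W
      rw [Matrix.conjTranspose_eq_transpose_of_trivial, Matrix.transpose_mul,
        Matrix.transpose_mul, hWsym, hMtsym t, Matrix.mul_assoc]
    · intro x hx
      simp only [star_trivial]
      rw [hcong t x]
      have := (hMtpos t ht).dotProduct_mulVec_pos (hWxne x hx)
      simpa using this
  have hpos : ∀ t ∈ Set.Icc (0:ℝ) 1, ∀ k, 0 < 1 + t * s k := by
    intro t ht k
    set v : Fin n' → ℝ := ⇑(hS.eigenvectorBasis k) with hvdef
    have hv0 : v ≠ 0 := by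
      intro h0
      apply hS.eigenvectorBasis.orthonormal.ne_zero k
      ext j
      have := congrFun h0 j
      simpa using this
    have hvS : S *ᵥ v = s k • v := hS.mulVec_eigenvectorBasis k
    have hQ : v ⬝ᵥ (1 + t • S) *ᵥ v = (1 + t * s k) * (v ⬝ᵥ v) := by
      rw [Matrix.add_mulVec, Matrix.one_mulVec, Matrix.smul_mulVec, hvS,
        dotProduct_add, dotProduct_smul]
      simp only [smul_smul, dotProduct_smul, smul_eq_mul]
      ring
    have hQpos : 0 < v ⬝ᵥ (1 + t • S) *ᵥ v := by
      have := (hIPD t ht).dotProduct_mulVec_pos hv0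
      simpa using this
    have hvv : 0 < v ⬝ᵥ v := by
      have h1 : v ⬝ᵥ v = ∑ j, v j ^ 2 := by
        unfold dotProduct
        exact Finset.sum_congr rfl fun j _ => (pow_two (v j)).symm
      rw [h1]
      exact sum_sq_pos hv0
    rw [hQ] at hQpos
    nlinarith [hQpos, hvv]
  -- determinant formula along the segment
  have hdW2 : W.det * W.det = (A.det)⁻¹ := by
    rw [← Matrix.det_mul, hWW, Matrix.det_nonsing_inv, Ring.inverse_eq_inv']
  have hconj1 : ∀ t : ℝ, 1 + t • S = conjd hS ((1 : Fin n' → ℝ) + t • s) := by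
    intro t
    rw [conjd_linear hS 1 s t, conjd_one, conjd_eigen]
  have hdetI : ∀ t : ℝ, (1 + t • S).det = ∏ k, (1 + t * s k) := by
    intro t
    rw [hconj1 t, det_conjd]
    apply Finset.prod_congr rfl
    intro k _
    simp
  have hdet_Mt : ∀ t : ℝ, (Mt t).det = A.det * ∏ k, (1 + t * s k) := by
    intro t
    have h1 : W.det * (Mt t).det * W.det = ∏ k, (1 + t * s k) := by
      rw [← hdetI t, ← hWMW t, Matrix.det_mul, Matrix.det_mul]
    have h2 : (A.det)⁻¹ * (Mt t).det = ∏ k, (1 + t * s k) := by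
      rw [← hdW2]; linear_combination h1
    have h3 := congrArg (fun r => A.det * r) h2
    rwa [← mul_assoc, mul_inv_cancel₀ hAdet, one_mul] at h3
  have hlog_Mt : ∀ t ∈ Set.Icc (0:ℝ) 1, Real.log (Mt t).det
      = Real.log A.det + ∑ k, Real.log (1 + t * s k) := by
    intro t ht
    rw [hdet_Mt t,
      Real.log_mul hAdet (Finset.prod_ne_zero_iff.mpr (fun k _ => ne_of_gt (hpos t ht k))),
      Real.log_prod (fun k _ => ne_of_gt (hpos t ht k))]
  set K : ℝ := (σ ^ 2 / μ) ^ 2 * ∑ j, δ j ^ 2 with hKdef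
  have hK0 : 0 ≤ K := by positivity
  -- trace bound along the segment
  have htrace_bd : ∀ t ∈ Set.Icc (0:ℝ) 1, (∑ k, (s k * (1 + t * s k)⁻¹) ^ 2) ≤ K := by
    intro t ht
    have hid1 : (1 + t • S)⁻¹ = conjd hS (fun k => (1 + t * s k)⁻¹) := by
      rw [hconj1 t]
      have hinv := conjd_inv hS (d := (1 : Fin n' → ℝ) + t • s) (fun k => by
        have h := hpos t ht k
        simp only [Pi.add_apply, Pi.one_apply, Pi.smul_apply, smul_eq_mul]
        exact ne_of_gt h)
      rw [hinv]
      try congr 1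
      try funext k
      try simp
    have hid2 : S * (1 + t • S)⁻¹ = conjd hS (fun k => s k * (1 + t * s k)⁻¹) := by
      calc S * (1 + t • S)⁻¹ = conjd hS s * conjd hS (fun k => (1 + t * s k)⁻¹) := by
            rw [hid1, hsdef, conjd_eigen]
        _ = conjd hS (fun k => s k * (1 + t * s k)⁻¹) := by
            rw [conjd_mul]
            congr 1
    have hid3 : Matrix.trace ((S * (1 + t • S)⁻¹) * (S * (1 + t • S)⁻¹))
        = ∑ k, (s k * (1 + t * s k)⁻¹) ^ 2 := by
      rw [hid2, conjd_mul, trace_conjd]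
      apply Finset.sum_congr rfl
      intro k _
      simp [pow_two]
    set X : Matrix (Fin n') (Fin n') ℝ := Δ * ((Mt t)⁻¹ * W⁻¹) with hXdef
    have hXW : X * W = Δ * (Mt t)⁻¹ := by
      calc X * W = Δ * ((Mt t)⁻¹ * (W⁻¹ * W)) := by
            rw [hXdef]; simp only [Matrix.mul_assoc]
        _ = Δ * (Mt t)⁻¹ := by rw [hWiW, Matrix.mul_one]
    have hid4 : S * (1 + t • S)⁻¹ = W * X := by
      rw [← hWMW t, Matrix.mul_inv_rev, Matrix.mul_inv_rev, hSdef, hXdef]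
      calc W * Δ * W * (W⁻¹ * ((Mt t)⁻¹ * W⁻¹))
          = W * (Δ * ((W * W⁻¹) * ((Mt t)⁻¹ * W⁻¹))) := by simp only [Matrix.mul_assoc]
        _ = W * (Δ * ((Mt t)⁻¹ * W⁻¹)) := by rw [hWWi, Matrix.one_mul]
    have hid5 : Matrix.trace ((S * (1 + t • S)⁻¹) * (S * (1 + t • S)⁻¹))
        = Matrix.trace (((Mt t)⁻¹ * Δ) * ((Mt t)⁻¹ * Δ)) := by
      rw [hid4]
      have e1 : (W * X) * (W * X) = W * (X * (W * X)) := by simp only [Matrix.mul_assoc]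
      rw [e1, Matrix.trace_mul_comm]
      have e2 : (X * (W * X)) * W = (X * W) * (X * W) := by simp only [Matrix.mul_assoc]
      rw [e2, hXW]
      have e3 : (Δ * (Mt t)⁻¹) * (Δ * (Mt t)⁻¹) = Δ * ((Mt t)⁻¹ * (Δ * (Mt t)⁻¹)) := by
        simp only [Matrix.mul_assoc]
      rw [e3, Matrix.trace_mul_comm]
      have e4 : ((Mt t)⁻¹ * (Δ * (Mt t)⁻¹)) * Δ = ((Mt t)⁻¹ * Δ) * ((Mt t)⁻¹ * Δ) := by
        simp only [Matrix.mul_assoc]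
      rw [e4]
    have hbd : Matrix.trace (((Mt t)⁻¹ * Δ) * ((Mt t)⁻¹ * Δ)) ≤ K := by
      rw [hAB, hKdef]
      exact trace_bound (hMtpos t ht) hμ (hMtray t ht) hZbd δ
    calc ∑ k, (s k * (1 + t * s k)⁻¹) ^ 2 = Matrix.trace ((S * (1 + t • S)⁻¹) * (S * (1 + t • S)⁻¹)) := hid3.symm
      _ = Matrix.trace (((Mt t)⁻¹ * Δ) * ((Mt t)⁻¹ * Δ)) := hid5
      _ ≤ K := hbd
  -- one-dimensional convexity
  set f : ℝ → ℝ := fun t => Real.log A.det + (∑ k, Real.log (1 + t * s k)) + K / 2 * t ^ 2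
    with hfdef
  set f1 : ℝ → ℝ := fun t => (∑ k, s k * (1 + t * s k)⁻¹) + K * t with hf1def
  set f2 : ℝ → ℝ := fun t => K + ∑ k, -(s k * (1 + t * s k)⁻¹) ^ 2 with hf2def
  have hconv : ConvexOn ℝ (Set.Icc (0:ℝ) 1) f := by
    apply convexOn_of_hasDerivWithinAt2_nonneg (convex_Icc 0 1) (f' := f1) (f'' := f2)
    · apply ContinuousOn.add
      · apply ContinuousOn.add continuousOn_const
        apply continuousOn_finset_sum
        intro k _
        apply ContinuousOn.log
        · exact (continuous_const.add (continuous_id.mul continuous_const)).continuousOn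
        · intro t ht
          exact ne_of_gt (hpos t ht k)
      · exact (continuous_const.mul (continuous_pow 2)).continuousOn
    · intro t ht
      rw [interior_Icc] at ht
      have hts : t ∈ Set.Icc (0:ℝ) 1 := ⟨le_of_lt ht.1, le_of_lt ht.2⟩
      apply HasDerivAt.hasDerivWithinAt
      have hsum : HasDerivAt (fun u => ∑ k, Real.log (1 + u * s k))
          (∑ k, s k * (1 + t * s k)⁻¹) t := by
        apply HasDerivAt.fun_sum
        intro k _
        have h1 : HasDerivAt (fun u : ℝ => 1 + u * s k) (s k) t := by
          simpa using ((hasDerivAt_id t).mul_const (s k)).const_add (1:ℝ)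
        have h2 := h1.log (ne_of_gt (hpos t hts k))
        exact h2.congr_deriv (div_eq_mul_inv _ _)
      have hquad : HasDerivAt (fun u : ℝ => K / 2 * u ^ 2) (K * t) t := by
        have := (hasDerivAt_pow 2 t).const_mul (K / 2)
        exact this.congr_deriv (by rw [show (2 - 1 : ℕ) = 1 from rfl, pow_one]; ring)
      have htot := ((hasDerivAt_const t (Real.log A.det)).add hsum).add hquad
      convert htot using 1
      · rw [hfdef]; rfl
      rw [hf1def]
      ring
    · intro t ht
      rw [interior_Icc] at ht
      have hts : t ∈ Set.Icc (0:ℝ) 1 := ⟨le_of_lt ht.1, le_of_lt ht.2⟩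
      apply HasDerivAt.hasDerivWithinAt
      have hsum : HasDerivAt (fun u => ∑ k, s k * (1 + u * s k)⁻¹)
          (∑ k, -(s k * (1 + t * s k)⁻¹) ^ 2) t := by
        apply HasDerivAt.fun_sum
        intro k _
        have h1 : HasDerivAt (fun u : ℝ => 1 + u * s k) (s k) t := by
          simpa using ((hasDerivAt_id t).mul_const (s k)).const_add (1:ℝ)
        have h2 := (h1.inv (ne_of_gt (hpos t hts k))).const_mul (s k)
        exact h2.congr_deriv (by rw [div_eq_mul_inv, ← inv_pow]; ring)
      have hlin : HasDerivAt (fun u : ℝ => K * u) K t := by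
        simpa using (hasDerivAt_id t).const_mul K
      have htot := hsum.add hlin
      convert htot using 1
      · rw [hf1def]; rfl
      rw [hf2def]
      ring
    · intro t ht
      rw [interior_Icc] at ht
      have hts : t ∈ Set.Icc (0:ℝ) 1 := ⟨le_of_lt ht.1, le_of_lt ht.2⟩
      have hbd := htrace_bd t hts
      rw [hf2def]
      simp only
      have hneg : ∑ k, -(s k * (1 + t * s k)⁻¹) ^ 2 = -(∑ k, (s k * (1 + t * s k)⁻¹) ^ 2) := by
        rw [← Finset.sum_neg_distrib]
      rw [hneg]
      linarith
  -- conclude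
  have h01 : (0:ℝ) ∈ Set.Icc (0:ℝ) 1 := by norm_num
  have h11 : (1:ℝ) ∈ Set.Icc (0:ℝ) 1 := by norm_num
  have hbm : b ∈ Set.Icc (0:ℝ) 1 := ⟨hb, by linarith⟩
  have hcomb := hconv.2 h01 h11 ha hb hab
  have hsm : a • (0:ℝ) + b • (1:ℝ) = b := by simp
  rw [hsm] at hcomb
  have hf0 : f 0 = Real.log A.det := by
    rw [hfdef]
    simp
  have hf1v : f 1 = Real.log B.det + K / 2 := by
    have h := hlog_Mt 1 h11
    rw [hMt1] at h
    rw [hfdef]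
    simp only
    rw [h]
    norm_num
  have hfb : f b = Real.log (a • A + b • B).det + K / 2 * b ^ 2 := by
    have h := hlog_Mt b hbm
    rw [hMtb] at h
    rw [hfdef]
    simp only
    rw [h]
  rw [hfb, hf0, hf1v] at hcomb
  simp only [smul_eq_mul] at hcomb
  have hgoal : (σ ^ 2 / μ) ^ 2 * (∑ j, δ j ^ 2) / 2 * (a * b) = K / 2 * (a * b) := by
    rw [hKdef]
  rw [hgoal]
  have hb2 : K / 2 * b ^ 2 = K / 2 * b - K / 2 * (a * b) := by
    have haeq : a = 1 - b := by linarith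
    rw [haeq]; ring
  linarith

lemma diag_comb {k : ℕ} (γ₁ γ₂ : Fin k → ℝ) (a b : ℝ) :
    diagonal (a • γ₁ + b • γ₂) = a • diagonal γ₁ + b • diagonal γ₂ := by
  ext i j
  by_cases hij : i = j <;> simp [Matrix.diagonal_apply, hij]

lemma diag_sub {k : ℕ} (γ₁ γ₂ : Fin k → ℝ) :
    diagonal (γ₂ - γ₁) = diagonal γ₂ - diagonal γ₁ := by
  ext i j
  by_cases hij : i = j <;> simp [Matrix.diagonal_apply, hij]

lemma zdz_quad {n k : ℕ} (Z : Matrix (Fin n) (Fin k) ℝ) (γ : Fin k → ℝ)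
    (hγ : ∀ j, 0 ≤ γ j) (v : Fin n → ℝ) :
    0 ≤ v ⬝ᵥ (Z * diagonal γ * Zᵀ) *ᵥ v := by
  have h1 : v ⬝ᵥ (Z * diagonal γ * Zᵀ) *ᵥ v
      = (Zᵀ *ᵥ v) ⬝ᵥ (diagonal γ *ᵥ (Zᵀ *ᵥ v)) := by
    rw [← Matrix.mulVec_mulVec, ← Matrix.mulVec_mulVec, Matrix.dotProduct_mulVec v Z]
    congr 1
    rw [← Matrix.transpose_transpose Z, Matrix.vecMul_transpose, Matrix.transpose_transpose]
  rw [h1]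
  unfold dotProduct
  apply Finset.sum_nonneg
  intro j _
  rw [Matrix.mulVec_diagonal]
  nlinarith [hγ j, sq_nonneg ((Zᵀ *ᵥ v) j)]

/-- convex-combination identity for Omega. -/
lemma omega_comb {m p q : ℕ} (D : LMEData m p q) (i : Fin m) (γ₁ γ₂ : Vec q)
    {a b : ℝ} (hab : a + b = 1) :
    D.Omega (diagonal (a • γ₁ + b • γ₂)) i
      = a • D.Omega (diagonal γ₁) i + b • D.Omega (diagonal γ₂) i := by
  unfold LMEData.Omega
  rw [diag_comb, Matrix.mul_add, Matrix.add_mul, Matrix.mul_smul, Matrix.smul_mul,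
    Matrix.mul_smul, Matrix.smul_mul, smul_add, smul_add]
  have hl : a • D.lam i + b • D.lam i = D.lam i := by
    rw [← add_smul, hab, one_smul]
  nth_rewrite 1 [← hl]
  abel

lemma omega_diff {m p q : ℕ} (D : LMEData m p q) (i : Fin m) (γ₁ γ₂ : Vec q) :
    D.Omega (diagonal γ₂) i - D.Omega (diagonal γ₁) i
      = D.Z i * diagonal (γ₂ - γ₁) * (D.Z i)ᵀ := by
  unfold LMEData.Omega
  rw [diag_sub, Matrix.mul_sub, Matrix.sub_mul]
  abel

lemma omega_sym {m p q : ℕ} (D : LMEData m p q) (hlam : ∀ i, (D.lam i).PosDef)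
    (i : Fin m) (γ : Vec q) : (D.Omega (diagonal γ) i)ᵀ = D.Omega (diagonal γ) i := by
  unfold LMEData.Omega
  rw [Matrix.transpose_add, Matrix.transpose_mul, Matrix.transpose_mul,
    Matrix.transpose_transpose, Matrix.diagonal_transpose, herm_transpose (hlam i).isHermitian,
    Matrix.mul_assoc]

lemma omega_ray {m p q : ℕ} (D : LMEData m p q) (hlam : ∀ i, (D.lam i).PosDef)
    (hn : ∀ i, 0 < D.n i) (i : Fin m) (γ : Vec q) (hγ : ∀ j, 0 ≤ γ j) (v : Fin (D.n i) → ℝ) :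
    minEig (D.lam i) * (∑ j, v j ^ 2) ≤ v ⬝ᵥ (D.Omega (diagonal γ) i) *ᵥ v := by
  unfold LMEData.Omega
  rw [Matrix.add_mulVec, dotProduct_add]
  have h1 := zdz_quad (D.Z i) γ hγ v
  have h2 := (minEig_spec (hn i) (hlam i)).2 v
  linarith

lemma quad_convex {n : ℕ} {A B : Matrix (Fin n) (Fin n) ℝ} (hA : A.PosDef) (hB : B.PosDef)
    {a b : ℝ} (ha : 0 ≤ a) (hb : 0 ≤ b) (hab : a + b = 1) (hC : (a • A + b • B).PosDef)
    (r₁ r₂ : Fin n → ℝ) :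
    (a • r₁ + b • r₂) ⬝ᵥ (a • A + b • B)⁻¹ *ᵥ (a • r₁ + b • r₂)
      ≤ a * (r₁ ⬝ᵥ A⁻¹ *ᵥ r₁) + b * (r₂ ⬝ᵥ B⁻¹ *ᵥ r₂) := by
  set M : Matrix (Fin n) (Fin n) ℝ := a • A + b • B with hM
  set r : Fin n → ℝ := a • r₁ + b • r₂ with hr
  have hdet : IsUnit M.det := isUnit_iff_ne_zero.mpr (ne_of_gt hC.det_pos)
  set xs : Fin n → ℝ := M⁻¹ *ᵥ r with hxs
  have hMx : M *ᵥ xs = r := by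
    rw [hxs, Matrix.mulVec_mulVec, Matrix.mul_nonsing_inv _ hdet, Matrix.one_mulVec]
  have hkey : r ⬝ᵥ M⁻¹ *ᵥ r = 2 * (xs ⬝ᵥ r) - xs ⬝ᵥ M *ᵥ xs := by
    have e1 : r ⬝ᵥ M⁻¹ *ᵥ r = r ⬝ᵥ xs := by rw [hxs]
    have e2 : xs ⬝ᵥ M *ᵥ xs = xs ⬝ᵥ r := by rw [hMx]
    rw [e1, e2, dotProduct_comm r xs]
    ring
  have hsplit : 2 * (xs ⬝ᵥ r) - xs ⬝ᵥ M *ᵥ xs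
      = a * (2 * (xs ⬝ᵥ r₁) - xs ⬝ᵥ A *ᵥ xs) + b * (2 * (xs ⬝ᵥ r₂) - xs ⬝ᵥ B *ᵥ xs) := by
    rw [hr, hM]
    rw [dotProduct_add, dotProduct_smul, dotProduct_smul, Matrix.add_mulVec,
      Matrix.smul_mulVec, Matrix.smul_mulVec, dotProduct_add,
      dotProduct_smul, dotProduct_smul]
    simp only [smul_eq_mul]
    ring
  rw [hkey, hsplit]
  have h1 := fenchel hA xs r₁
  have h2 := fenchel hB xs r₂
  have h1' := mul_le_mul_of_nonneg_left h1 ha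
  have h2' := mul_le_mul_of_nonneg_left h2 hb
  linarith

end WCaux


/-- L is η̄-weakly convex on ℝ^p × ℝ_+^q, i.e.
(β,γ) ↦ L(β,γ) + (η̄/2)‖(β,γ)‖² is convex there. -/
theorem L_weakly_convex
    {m p q : ℕ} (hm : 0 < m) (hp : 0 < p) (hq : 0 < q)
    (D : LMEData m p q) (hn : ∀ i, 0 < D.n i) (hlam : ∀ i, (D.lam i).PosDef) :
    ConvexOn ℝ {x : Vec p × Vec q | ∀ j, 0 ≤ x.2 j}
      (fun x => D.L x.1 x.2 + D.etabar / 2 * sqnorm2 x) := by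

  classical
  constructor
  · -- convexity of the constraint set
    intro x hx y hy a b ha hb hab
    intro j
    have h1 : (0:ℝ) ≤ x.2 j := hx j
    have h2 : (0:ℝ) ≤ y.2 j := hy j
    have he : (a • x + b • y).2 j = a * x.2 j + b * y.2 j := rfl
    rw [he]
    have := mul_nonneg ha h1
    have := mul_nonneg hb h2
    linarith
  · intro x hx y hy a b ha hb hab
    simp only [smul_eq_mul]
    have hx' : ∀ j, (0:ℝ) ≤ x.2 j := hx
    have hy' : ∀ j, (0:ℝ) ≤ y.2 j := hy
    have hxy1 : (a • x + b • y).1 = a • x.1 + b • y.1 := rfl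
    have hxy2 : (a • x + b • y).2 = a • x.2 + b • y.2 := rfl
    rw [hxy1, hxy2]
    set Sd2 : ℝ := ∑ j, ((y.2 - x.2) j) ^ 2 with hSd2def
    have hSd2nn : 0 ≤ Sd2 := by positivity
    set Sd1 : ℝ := ∑ j, ((x.1 - y.1) j) ^ 2 with hSd1def
    have hSd1nn : 0 ≤ Sd1 := by positivity
    -- per-index data
    have hμpos : ∀ i, 0 < minEig (D.lam i) := fun i => (WCaux.minEig_spec (hn i) (hlam i)).1
    have hZbd : ∀ i, ∀ v : Vec q, (∑ ii, ((D.Z i *ᵥ v) ii) ^ 2)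
        ≤ (opNorm (D.Z i)) ^ 2 * ∑ j, v j ^ 2 := by
      intro i v
      have h := (WCaux.opNorm_spec (D.Z i)).2 v
      have h2 : (eNorm (D.Z i *ᵥ v)) ^ 2 ≤ (opNorm (D.Z i) * eNorm v) ^ 2 :=
        pow_le_pow_left₀ (WCaux.eNorm_nonneg' _) h 2
      rwa [WCaux.eNorm_sq, mul_pow, WCaux.eNorm_sq] at h2
    have hγbar : ∀ j, (0:ℝ) ≤ (a • x.2 + b • y.2) j := by
      intro j
      have : (a • x.2 + b • y.2) j = a * x.2 j + b * y.2 j := rfl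
      rw [this]
      have := mul_nonneg ha (hx' j)
      have := mul_nonneg hb (hy' j)
      linarith
    have hΩ1pos : ∀ i, (D.Omega (diagonal x.2) i).PosDef := fun i =>
      WCaux.posdef_of_ray (WCaux.omega_sym D hlam i x.2) (hμpos i)
        (WCaux.omega_ray D hlam hn i x.2 hx')
    have hΩ2pos : ∀ i, (D.Omega (diagonal y.2) i).PosDef := fun i =>
      WCaux.posdef_of_ray (WCaux.omega_sym D hlam i y.2) (hμpos i)
        (WCaux.omega_ray D hlam hn i y.2 hy')
    have hΩcpos : ∀ i, (D.Omega (diagonal (a • x.2 + b • y.2)) i).PosDef := fun i =>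
      WCaux.posdef_of_ray (WCaux.omega_sym D hlam i _) (hμpos i)
        (WCaux.omega_ray D hlam hn i _ hγbar)
    have hcombi : ∀ i, D.Omega (diagonal (a • x.2 + b • y.2)) i
        = a • D.Omega (diagonal x.2) i + b • D.Omega (diagonal y.2) i := fun i =>
      WCaux.omega_comb D i x.2 y.2 hab
    -- residual decomposition
    have hr : ∀ i, D.y i - D.X i *ᵥ (a • x.1 + b • y.1)
        = a • (D.y i - D.X i *ᵥ x.1) + b • (D.y i - D.X i *ᵥ y.1) := by
      intro i
      have hy0 : D.y i = a • D.y i + b • D.y i := by rw [← add_smul, hab, one_smul]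
      rw [Matrix.mulVec_add, Matrix.mulVec_smul, Matrix.mulVec_smul, smul_sub, smul_sub]
      nth_rewrite 1 [hy0]
      abel
    -- quadratic-term inequality per index
    have hQ : ∀ i, (D.y i - D.X i *ᵥ (a • x.1 + b • y.1)) ⬝ᵥ
        ((D.Omega (diagonal (a • x.2 + b • y.2)) i)⁻¹ *ᵥ (D.y i - D.X i *ᵥ (a • x.1 + b • y.1)))
        ≤ a * ((D.y i - D.X i *ᵥ x.1) ⬝ᵥ ((D.Omega (diagonal x.2) i)⁻¹ *ᵥ (D.y i - D.X i *ᵥ x.1)))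
          + b * ((D.y i - D.X i *ᵥ y.1) ⬝ᵥ ((D.Omega (diagonal y.2) i)⁻¹ *ᵥ (D.y i - D.X i *ᵥ y.1))) := by
      intro i
      rw [hr i, hcombi i]
      exact WCaux.quad_convex (hΩ1pos i) (hΩ2pos i) ha hb hab
        (by rw [← hcombi i]; exact hΩcpos i) _ _
    -- log-det inequality per index
    have hLD : ∀ i, Real.log (D.Omega (diagonal (a • x.2 + b • y.2)) i).det
        ≤ a * Real.log (D.Omega (diagonal x.2) i).det
          + b * Real.log (D.Omega (diagonal y.2) i).det
          + ((opNorm (D.Z i)) ^ 2 / minEig (D.lam i)) ^ 2 * Sd2 / 2 * (a * b) := by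
      intro i
      rw [hcombi i]
      exact WCaux.logdet_ineq (WCaux.omega_diff D i x.2 y.2) (hμpos i) (hZbd i)
        (WCaux.omega_sym D hlam i x.2) (WCaux.omega_sym D hlam i y.2)
        (WCaux.omega_ray D hlam hn i x.2 hx') (WCaux.omega_ray D hlam hn i y.2 hy')
        ha hb hab
    -- coefficients and nu
    set νf : Fin m → ℝ := fun i => (1:ℝ) / 2 * ((minEig (D.lam i)) ^ 2)⁻¹ * (opNorm (D.Z i)) ^ 4
      with hνfdef
    have hnudef : D.nu = ⨆ i, νf i := rfl
    have hνnn : ∀ i, 0 ≤ νf i := by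
      intro i
      rw [hνfdef]
      have := (WCaux.opNorm_spec (D.Z i)).1
      positivity
    have hνle : ∀ i, νf i ≤ D.nu := by
      intro i
      rw [hnudef]
      exact le_ciSup (Set.Finite.bddAbove (Set.finite_range νf)) i
    have hnu0 : 0 ≤ D.nu := by
      rw [hnudef]
      exact Real.iSup_nonneg hνnn
    have hcoef : ∀ i, ((opNorm (D.Z i)) ^ 2 / minEig (D.lam i)) ^ 2 = 2 * νf i := by
      intro i
      have hne := ne_of_gt (hμpos i)
      rw [hνfdef]
      field_simp
    -- summed inequality for L
    have hLsum : D.L (a • x.1 + b • y.1) (a • x.2 + b • y.2)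
        ≤ a * D.L x.1 x.2 + b * D.L y.1 y.2 + (m : ℝ) * (D.nu / 2 * Sd2 * (a * b)) := by
      simp only [LMEData.L, LMEData.LML]
      calc ∑ i, ((1:ℝ) / 2 * ((D.y i - D.X i *ᵥ (a • x.1 + b • y.1)) ⬝ᵥ
              ((D.Omega (diagonal (a • x.2 + b • y.2)) i)⁻¹ *ᵥ (D.y i - D.X i *ᵥ (a • x.1 + b • y.1))))
            + (1:ℝ) / 2 * Real.log (D.Omega (diagonal (a • x.2 + b • y.2)) i).det)
          ≤ ∑ i, (a * ((1:ℝ) / 2 * ((D.y i - D.X i *ᵥ x.1) ⬝ᵥ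
              ((D.Omega (diagonal x.2) i)⁻¹ *ᵥ (D.y i - D.X i *ᵥ x.1)))
              + (1:ℝ) / 2 * Real.log (D.Omega (diagonal x.2) i).det)
            + b * ((1:ℝ) / 2 * ((D.y i - D.X i *ᵥ y.1) ⬝ᵥ
              ((D.Omega (diagonal y.2) i)⁻¹ *ᵥ (D.y i - D.X i *ᵥ y.1)))
              + (1:ℝ) / 2 * Real.log (D.Omega (diagonal y.2) i).det)
            + D.nu / 2 * Sd2 * (a * b)) := by
            apply Finset.sum_le_sum
            intro i _
            have h1 := hQ i
            have h2 := hLD i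
            rw [hcoef i] at h2
            have h3 : νf i * Sd2 * (a * b) ≤ D.nu * Sd2 * (a * b) := by
              apply mul_le_mul_of_nonneg_right
                (mul_le_mul_of_nonneg_right (hνle i) hSd2nn) (mul_nonneg ha hb)
            nlinarith [h1, h2, h3]
        _ = a * ∑ i, ((1:ℝ) / 2 * ((D.y i - D.X i *ᵥ x.1) ⬝ᵥ
              ((D.Omega (diagonal x.2) i)⁻¹ *ᵥ (D.y i - D.X i *ᵥ x.1)))
              + (1:ℝ) / 2 * Real.log (D.Omega (diagonal x.2) i).det)
            + b * ∑ i, ((1:ℝ) / 2 * ((D.y i - D.X i *ᵥ y.1) ⬝ᵥ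
              ((D.Omega (diagonal y.2) i)⁻¹ *ᵥ (D.y i - D.X i *ᵥ y.1)))
              + (1:ℝ) / 2 * Real.log (D.Omega (diagonal y.2) i).det)
            + (m : ℝ) * (D.nu / 2 * Sd2 * (a * b)) := by
            rw [Finset.sum_add_distrib, Finset.sum_add_distrib, ← Finset.mul_sum,
              ← Finset.mul_sum, Finset.sum_const, Finset.card_univ, Fintype.card_fin,
              nsmul_eq_mul]
    -- quadratic slack identity
    have hsq1 : ∀ {k : ℕ} (u v : Fin k → ℝ),
        a * (∑ j, u j ^ 2) + b * (∑ j, v j ^ 2) - (∑ j, (a * u j + b * v j) ^ 2)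
          = a * b * ∑ j, (u j - v j) ^ 2 := by
      intro k u v
      rw [Finset.mul_sum, Finset.mul_sum, Finset.mul_sum, ← Finset.sum_add_distrib,
        ← Finset.sum_sub_distrib]
      apply Finset.sum_congr rfl
      intro j _
      have hb' : b = 1 - a := by linarith
      rw [hb']
      ring
    have hsq : a * sqnorm2 x + b * sqnorm2 y - sqnorm2 (a • x + b • y)
        = a * b * (Sd1 + Sd2) := by
      have e1 : (∑ j, ((a • x + b • y).1 j) ^ 2) = ∑ j, (a * x.1 j + b * y.1 j) ^ 2 := rfl
      have e2 : (∑ j, ((a • x + b • y).2 j) ^ 2) = ∑ j, (a * x.2 j + b * y.2 j) ^ 2 := rfl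
      have h1 := hsq1 x.1 y.1
      have h2 := hsq1 x.2 y.2
      have e3 : Sd2 = ∑ j, (x.2 j - y.2 j) ^ 2 := by
        rw [hSd2def]
        apply Finset.sum_congr rfl
        intro j _
        have : (y.2 - x.2) j = y.2 j - x.2 j := rfl
        rw [this]
        ring
      have e4 : Sd1 = ∑ j, (x.1 j - y.1 j) ^ 2 := by
        rw [hSd1def]
        apply Finset.sum_congr rfl
        intro j _
        rfl
      unfold sqnorm2
      rw [e1, e2, e3, e4]
      linarith [h1, h2]
    -- final assembly
    have hE : D.etabar = D.nu * (m : ℝ) := rfl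
    rw [hE]
    have hmul : a * (D.nu * (m:ℝ) / 2 * sqnorm2 x) + b * (D.nu * (m:ℝ) / 2 * sqnorm2 y)
        = D.nu * (m:ℝ) / 2 * sqnorm2 (a • x + b • y)
          + D.nu * (m:ℝ) / 2 * (a * b * (Sd1 + Sd2)) := by
      linear_combination (D.nu * (m:ℝ) / 2) * hsq
    have hkey : 0 ≤ D.nu * (m:ℝ) / 2 * (a * b) * Sd1 := by
      have hm0 : (0:ℝ) ≤ (m:ℝ) := Nat.cast_nonneg m
      have := mul_nonneg (mul_nonneg (mul_nonneg (mul_nonneg hnu0 hm0) (by norm_num : (0:ℝ) ≤ 1/2)) (mul_nonneg ha hb)) hSd1nn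
      calc (0:ℝ) ≤ D.nu * (m:ℝ) * (1/2) * (a * b) * Sd1 := this
        _ = D.nu * (m:ℝ) / 2 * (a * b) * Sd1 := by ring
    have hfin : (m:ℝ) * (D.nu / 2 * Sd2 * (a * b))
        ≤ D.nu * (m:ℝ) / 2 * (a * b * (Sd1 + Sd2)) := by
      have hdiff : D.nu * (m:ℝ) / 2 * (a * b * (Sd1 + Sd2))
          - (m:ℝ) * (D.nu / 2 * Sd2 * (a * b)) = D.nu * (m:ℝ) / 2 * (a * b) * Sd1 := by
        ring
      linarith [hkey, hdiff.ge, hdiff.le]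
    linarith [hLsum, hmul, hfin]
end
end

section
/- For every μ ≥ 0, every η > η̄, and every (β̃,γ̃) ∈ ℝ^p × ℝ^q, the function (β,γ) ↦ L_{η,μ}((β,γ),(β̃,γ̃)) is strongly convex on ℝ^p × ℝ_+^q with modulus of strong convexity η − η̄; that is, (β,γ) ↦ L_{η,μ}((β,γ),(β̃,γ̃)) − ((η−η̄)/2)‖(β,γ)‖² is convex on ℝ^p × ℝ_+^q. -/
open Matrix Real Filter Topology Bornology
open scoped Pointwise

noncomputable section

section S2
variable {n q : ℕ}

lemma posdef_quad_pos {M : Matrix (Fin n) (Fin n) ℝ} (hM : M.PosDef) {x : Vec n} (hx : x ≠ 0) :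
    0 < x ⬝ᵥ M *ᵥ x := by simpa using hM.dotProduct_mulVec_pos hx

lemma possemidef_quad_nonneg {M : Matrix (Fin n) (Fin n) ℝ} (hM : M.PosSemidef) (x : Vec n) :
    0 ≤ x ⬝ᵥ M *ᵥ x := by simpa using hM.dotProduct_mulVec_nonneg x

lemma eNorm_nonneg {ι : Type*} [Fintype ι] (x : ι → ℝ) : 0 ≤ eNorm x := Real.sqrt_nonneg _

lemma eNorm_sq {ι : Type*} [Fintype ι] (x : ι → ℝ) : (eNorm x)^2 = ∑ j, (x j)^2 :=
  Real.sq_sqrt (Finset.sum_nonneg fun j _ => sq_nonneg _)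

lemma eNorm_eq_zero {ι : Type*} [Fintype ι] {x : ι → ℝ} (h : eNorm x = 0) : x = 0 := by
  have h2 : ∑ j, (x j)^2 = 0 := by
    have := eNorm_sq x; rw [h] at this; simpa using this.symm
  funext j
  have := (Finset.sum_eq_zero_iff_of_nonneg (fun i _ => sq_nonneg (x i))).mp h2 j (Finset.mem_univ j)
  exact pow_eq_zero_iff (by norm_num) |>.mp this

lemma eNorm_smul {ι : Type*} [Fintype ι] (a : ℝ) (x : ι → ℝ) : eNorm (a • x) = |a| * eNorm x := by
  rw [eNorm, eNorm]
  have : ∑ j, ((a • x) j)^2 = a^2 * ∑ j, (x j)^2 := by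
    rw [Finset.mul_sum]; exact Finset.sum_congr rfl fun j _ => by
      simp only [Pi.smul_apply, smul_eq_mul, mul_pow]
  rw [this, Real.sqrt_mul (sq_nonneg a), Real.sqrt_sq_eq_abs]

/-- row-wise Cauchy-Schwarz bound: Frobenius dominates operator norm. -/
lemma sum_sq_mulVec_le_frob (M : Matrix (Fin n) (Fin q) ℝ) (x : Vec q) :
    ∑ i, ((M *ᵥ x) i)^2 ≤ (∑ i, ∑ j, (M i j)^2) * ∑ j, (x j)^2 := by
  rw [Finset.sum_mul]
  refine Finset.sum_le_sum fun i _ => ?_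
  have : (M *ᵥ x) i = ∑ j, M i j * x j := rfl
  rw [this]
  exact Finset.sum_mul_sq_le_sq_mul_sq _ _ _

lemma opNorm_set_nonempty (M : Matrix (Fin n) (Fin q) ℝ) :
    {c : ℝ | 0 ≤ c ∧ ∀ x : Vec q, eNorm (M.mulVec x) ≤ c * eNorm x}.Nonempty := by
  refine ⟨Real.sqrt (∑ i, ∑ j, (M i j)^2), Real.sqrt_nonneg _, fun x => ?_⟩
  have key : eNorm (M *ᵥ x) ≤ Real.sqrt ((∑ i, ∑ j, (M i j)^2) * ∑ j, (x j)^2) :=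
    Real.sqrt_le_sqrt (sum_sq_mulVec_le_frob M x)
  rw [Real.sqrt_mul (x := ∑ i, ∑ j, (M i j)^2) (Finset.sum_nonneg fun i _ => Finset.sum_nonneg fun j _ => sq_nonneg _)] at key
  exact key

lemma opNorm_nonneg (M : Matrix (Fin n) (Fin q) ℝ) : 0 ≤ opNorm M :=
  le_csInf (opNorm_set_nonempty M) fun c hc => hc.1

lemma opNorm_spec (M : Matrix (Fin n) (Fin q) ℝ) (x : Vec q) :
    eNorm (M *ᵥ x) ≤ opNorm M * eNorm x := by
  have hcl : IsClosed {c : ℝ | 0 ≤ c ∧ ∀ x : Vec q, eNorm (M.mulVec x) ≤ c * eNorm x} := by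
    have : {c : ℝ | 0 ≤ c ∧ ∀ x : Vec q, eNorm (M.mulVec x) ≤ c * eNorm x}
        = {c : ℝ | 0 ≤ c} ∩ ⋂ x : Vec q, {c : ℝ | eNorm (M.mulVec x) ≤ c * eNorm x} := by
      ext c; simp [Set.mem_iInter, forall_and]
    rw [this]
    exact isClosed_Ici.inter (isClosed_iInter fun x =>
      isClosed_le continuous_const (continuous_id.mul continuous_const))
  have hbb : BddBelow {c : ℝ | 0 ≤ c ∧ ∀ x : Vec q, eNorm (M.mulVec x) ≤ c * eNorm x} :=
    ⟨0, fun c hc => hc.1⟩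
  have := hcl.csInf_mem (opNorm_set_nonempty M) hbb
  exact this.2 x

lemma sum_sq_mulVec_le (M : Matrix (Fin n) (Fin q) ℝ) (x : Vec q) :
    ∑ i, ((M *ᵥ x) i)^2 ≤ (opNorm M)^2 * ∑ j, (x j)^2 := by
  have h := opNorm_spec M x
  have h2 : (eNorm (M *ᵥ x))^2 ≤ (opNorm M * eNorm x)^2 := by
    apply sq_le_sq' _ h
    have := eNorm_nonneg (M *ᵥ x)
    nlinarith [mul_nonneg (opNorm_nonneg M) (eNorm_nonneg x)]
  rw [eNorm_sq] at h2
  calc ∑ i, ((M *ᵥ x) i)^2 ≤ (opNorm M * eNorm x)^2 := h2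
  _ = (opNorm M)^2 * ∑ j, (x j)^2 := by rw [mul_pow, eNorm_sq]

end S2
section S3
variable {n : ℕ}

lemma quadform_continuous (M : Matrix (Fin n) (Fin n) ℝ) :
    Continuous (fun y : EuclideanSpace ℝ (Fin n) => (fun i => y i) ⬝ᵥ M *ᵥ (fun i => y i)) := by
  have hcoord : ∀ i : Fin n, Continuous (fun y : EuclideanSpace ℝ (Fin n) => y i) := by
    intro i
    exact (continuous_apply i).comp (PiLp.continuous_ofLp 2 (fun _ : Fin n => ℝ))
  unfold dotProduct Matrix.mulVec
  refine continuous_finset_sum _ fun i _ => ((hcoord i).mul ?_)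
  exact continuous_finset_sum _ fun j _ => continuous_const.mul (hcoord j)

lemma rayleigh_image (M : Matrix (Fin n) (Fin n) ℝ) :
    {r : ℝ | ∃ x : Fin n → ℝ, eNorm x = 1 ∧ r = x ⬝ᵥ M.mulVec x}
      = (fun y : EuclideanSpace ℝ (Fin n) => (fun i => y i) ⬝ᵥ M *ᵥ (fun i => y i)) ''
        (Metric.sphere (0 : EuclideanSpace ℝ (Fin n)) 1) := by
  ext r
  constructor
  · rintro ⟨x, hx, rfl⟩
    refine ⟨(WithLp.equiv 2 _).symm x, ?_, rfl⟩
    rw [mem_sphere_zero_iff_norm, EuclideanSpace.norm_eq]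
    simp only [WithLp.equiv_symm_apply, PiLp.toLp_apply, Real.norm_eq_abs, sq_abs]
    exact hx
  · rintro ⟨y, hy, rfl⟩
    refine ⟨fun i => y i, ?_, rfl⟩
    rw [mem_sphere_zero_iff_norm, EuclideanSpace.norm_eq] at hy
    simpa only [eNorm, Real.norm_eq_abs, sq_abs] using hy

lemma minEig_mem (hn : 0 < n) (M : Matrix (Fin n) (Fin n) ℝ) :
    ∃ x : Fin n → ℝ, eNorm x = 1 ∧ minEig M = x ⬝ᵥ M.mulVec x := by
  have hcpt : IsCompact ((fun y : EuclideanSpace ℝ (Fin n) =>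
      (fun i => y i) ⬝ᵥ M *ᵥ (fun i => y i)) '' (Metric.sphere 0 1)) :=
    (isCompact_sphere _ _).image (quadform_continuous M)
  have hne : ((fun y : EuclideanSpace ℝ (Fin n) =>
      (fun i => y i) ⬝ᵥ M *ᵥ (fun i => y i)) '' (Metric.sphere 0 1)).Nonempty := by
    refine ⟨_, ⟨EuclideanSpace.single ⟨0, hn⟩ (1:ℝ), ?_, rfl⟩⟩
    rw [mem_sphere_zero_iff_norm, EuclideanSpace.norm_single]
    norm_num
  have := hcpt.sInf_mem hne
  rw [minEig, rayleigh_image]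
  obtain ⟨y, hy, hval⟩ := this
  refine ⟨fun i => y i, ?_, hval.symm⟩
  rw [mem_sphere_zero_iff_norm, EuclideanSpace.norm_eq] at hy
  simpa only [eNorm, Real.norm_eq_abs, sq_abs] using hy

lemma minEig_bddBelow (M : Matrix (Fin n) (Fin n) ℝ) :
    BddBelow {r : ℝ | ∃ x : Fin n → ℝ, eNorm x = 1 ∧ r = x ⬝ᵥ M.mulVec x} := by
  rw [rayleigh_image]
  exact ((isCompact_sphere _ _).image (quadform_continuous M)).bddBelow

lemma minEig_pos (hn : 0 < n) {M : Matrix (Fin n) (Fin n) ℝ} (hM : M.PosDef) :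
    0 < minEig M := by
  obtain ⟨x, hx, heq⟩ := minEig_mem hn M
  rw [heq]
  apply posdef_quad_pos hM
  intro h0
  rw [h0] at hx
  simp [eNorm] at hx

lemma minEig_quad_le {M : Matrix (Fin n) (Fin n) ℝ} (x : Vec n) (hM : M.PosDef) :
    minEig M * ∑ j, (x j)^2 ≤ x ⬝ᵥ M *ᵥ x := by
  rcases eq_or_ne x 0 with rfl | hx
  · simp
  have hc : 0 < eNorm x := by
    rcases (eNorm_nonneg x).lt_or_eq with h | h
    · exact h
    · exact absurd (eNorm_eq_zero h.symm) hx
  set c := eNorm x with hcdef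
  have hu : eNorm (c⁻¹ • x) = 1 := by
    rw [eNorm_smul, abs_of_pos (inv_pos.mpr hc), inv_mul_cancel₀ hc.ne']
  have hmem : (c⁻¹ • x) ⬝ᵥ M *ᵥ (c⁻¹ • x) ∈
      {r : ℝ | ∃ y : Fin n → ℝ, eNorm y = 1 ∧ r = y ⬝ᵥ M.mulVec y} := ⟨_, hu, rfl⟩
  have hle : minEig M ≤ (c⁻¹ • x) ⬝ᵥ M *ᵥ (c⁻¹ • x) := csInf_le (minEig_bddBelow M) hmem
  have hquad : (c⁻¹ • x) ⬝ᵥ M *ᵥ (c⁻¹ • x) = c⁻¹ * c⁻¹ * (x ⬝ᵥ M *ᵥ x) := by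
    rw [Matrix.mulVec_smul, dotProduct_smul, smul_dotProduct]
    simp [smul_eq_mul]
    ring_nf
  rw [hquad] at hle
  have hc2 : (∑ j, (x j)^2) = c^2 := (eNorm_sq x).symm
  rw [hc2]
  have := mul_le_mul_of_nonneg_right hle (sq_nonneg c)
  calc minEig M * c^2 ≤ c⁻¹ * c⁻¹ * (x ⬝ᵥ M *ᵥ x) * c^2 := this
  _ = (x ⬝ᵥ M *ᵥ x) * (c⁻¹ * c)^2 := by ring
  _ = x ⬝ᵥ M *ᵥ x := by rw [inv_mul_cancel₀ hc.ne']; ring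

end S3
section S4
variable {n q : ℕ}

/-- Z * diagonal γ * Zᵀ is PSD for γ ≥ 0. -/
lemma zdz_possemidef (Z : Matrix (Fin n) (Fin q) ℝ) {γ : Vec q} (hγ : ∀ j, 0 ≤ γ j) :
    (Z * Matrix.diagonal γ * Zᵀ).PosSemidef := by
  have hd : (Matrix.diagonal γ).PosSemidef := Matrix.PosSemidef.diagonal (fun j => hγ j)
  have := hd.mul_mul_conjTranspose_same Z
  rwa [Matrix.conjTranspose_eq_transpose_of_trivial] at this

/-- PSD + PD is PD. -/
lemma possemidef_add_posdef {A B : Matrix (Fin n) (Fin n) ℝ}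
    (hA : A.PosSemidef) (hB : B.PosDef) : (A + B).PosDef := by
  rw [add_comm]; exact hB.add_posSemidef hA

lemma omega_posdef (Z : Matrix (Fin n) (Fin q) ℝ) {Λ : Matrix (Fin n) (Fin n) ℝ}
    (hΛ : Λ.PosDef) {γ : Vec q} (hγ : ∀ j, 0 ≤ γ j) :
    (Z * Matrix.diagonal γ * Zᵀ + Λ).PosDef :=
  possemidef_add_posdef (zdz_possemidef Z hγ) hΛ

lemma omega_quad_lower (Z : Matrix (Fin n) (Fin q) ℝ) {Λ : Matrix (Fin n) (Fin n) ℝ}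
    (hΛ : Λ.PosDef) {γ : Vec q} (hγ : ∀ j, 0 ≤ γ j) (x : Vec n) :
    minEig Λ * ∑ j, (x j)^2 ≤ x ⬝ᵥ (Z * Matrix.diagonal γ * Zᵀ + Λ) *ᵥ x := by
  rw [Matrix.add_mulVec, dotProduct_add]
  have h1 := possemidef_quad_nonneg (zdz_possemidef Z hγ) x
  have h2 := minEig_quad_le x hΛ
  linarith

lemma real_symm {M : Matrix (Fin n) (Fin n) ℝ} (h : M.IsHermitian) : Mᵀ = M := by
  rw [← Matrix.conjTranspose_eq_transpose_of_trivial]; exact h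

/-- Lemma A : joint convexity of the quadratic-over-PD-matrix function (combination form). -/
lemma quad_combo {M₁ M₂ M : Matrix (Fin n) (Fin n) ℝ}
    (h1 : M₁.PosDef) (h2 : M₂.PosDef) (hM : M.PosDef) {a b : ℝ}
    (ha : 0 ≤ a) (hb : 0 ≤ b)
    (hcomb : a • M₁ + b • M₂ = M) (r₁ r₂ : Vec n) :
    (a • r₁ + b • r₂) ⬝ᵥ (M⁻¹ *ᵥ (a • r₁ + b • r₂)) ≤
      a * (r₁ ⬝ᵥ (M₁⁻¹ *ᵥ r₁)) + b * (r₂ ⬝ᵥ (M₂⁻¹ *ᵥ r₂)) := by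
  set r := a • r₁ + b • r₂ with hr
  set z := M⁻¹ *ᵥ r with hz
  have hMz : M *ᵥ z = r := by
    rw [hz, Matrix.mulVec_mulVec, Matrix.mul_nonsing_inv _ hM.det_pos.ne'.isUnit, Matrix.one_mulVec]
  -- r ⬝ᵥ M⁻¹ r = z ⬝ᵥ r
  have key0 : r ⬝ᵥ (M⁻¹ *ᵥ r) = z ⬝ᵥ r := by
    rw [← hz, dotProduct_comm]
  -- z ⬝ᵥ r = 2 z⬝r - z⬝Mz
  have hzMz : z ⬝ᵥ (M *ᵥ z) = z ⬝ᵥ r := by rw [hMz]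
  -- per-component bound
  have bound : ∀ (N : Matrix (Fin n) (Fin n) ℝ), N.PosDef → ∀ s : Vec n,
      2 * (z ⬝ᵥ s) - z ⬝ᵥ (N *ᵥ z) ≤ s ⬝ᵥ (N⁻¹ *ᵥ s) := by
    intro N hN s
    have hNdet : IsUnit N.det := hN.det_pos.ne'.isUnit
    have hNsymm : Nᵀ = N := real_symm hN.isHermitian
    have hpsd := hN.inv.posSemidef
    have hexp := possemidef_quad_nonneg hpsd (s - N *ᵥ z)
    have e1 : N⁻¹ *ᵥ (N *ᵥ z) = z := by
      rw [Matrix.mulVec_mulVec, Matrix.nonsing_inv_mul _ hNdet, Matrix.one_mulVec]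
    have e2 : (N *ᵥ z) ⬝ᵥ (N⁻¹ *ᵥ s) = z ⬝ᵥ s := by
      rw [Matrix.dotProduct_mulVec, ← Matrix.mulVec_transpose, Matrix.mulVec_mulVec,
        Matrix.transpose_nonsing_inv, hNsymm, Matrix.nonsing_inv_mul _ hNdet,
        Matrix.one_mulVec]
    have e3 : (N *ᵥ z) ⬝ᵥ z = z ⬝ᵥ (N *ᵥ z) := dotProduct_comm _ _
    have expand : (s - N *ᵥ z) ⬝ᵥ (N⁻¹ *ᵥ (s - N *ᵥ z))
        = s ⬝ᵥ (N⁻¹ *ᵥ s) - 2 * (z ⬝ᵥ s) + z ⬝ᵥ (N *ᵥ z) := by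
      rw [sub_dotProduct, Matrix.mulVec_sub, dotProduct_sub,
        dotProduct_sub, e1, e2]
      rw [show s ⬝ᵥ z = z ⬝ᵥ s from dotProduct_comm _ _, e3]
      ring
    rw [expand] at hexp
    linarith
  have b1 := bound M₁ h1 r₁
  have b2 := bound M₂ h2 r₂
  -- combine
  have hsplit : z ⬝ᵥ r = a * (z ⬝ᵥ r₁) + b * (z ⬝ᵥ r₂) := by
    rw [hr, dotProduct_add, dotProduct_smul, dotProduct_smul]; rfl
  have hMsplit : z ⬝ᵥ (M *ᵥ z) = a * (z ⬝ᵥ (M₁ *ᵥ z)) + b * (z ⬝ᵥ (M₂ *ᵥ z)) := by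
    rw [← hcomb, Matrix.add_mulVec, dotProduct_add]
    rw [Matrix.smul_mulVec, Matrix.smul_mulVec,
      dotProduct_smul, dotProduct_smul]; rfl
  have final : r ⬝ᵥ (M⁻¹ *ᵥ r)
      = a * (2 * (z ⬝ᵥ r₁) - z ⬝ᵥ (M₁ *ᵥ z)) + b * (2 * (z ⬝ᵥ r₂) - z ⬝ᵥ (M₂ *ᵥ z)) := by
    rw [key0]
    have : z ⬝ᵥ r = 2 * (z ⬝ᵥ r) - z ⬝ᵥ (M *ᵥ z) := by rw [hzMz]; ring
    rw [this, hsplit, hMsplit]; ring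
  rw [final]
  have := add_le_add (mul_le_mul_of_nonneg_left b1 ha) (mul_le_mul_of_nonneg_left b2 hb)
  linarith

end S4
section S5
open Set

/-- derivative helpers -/
lemma hd_log_term (l : ℝ) {t : ℝ} (h : 0 < 1 + t * l) :
    HasDerivAt (fun s => Real.log (1 + s * l)) (l / (1 + t * l)) t := by
  have hu : HasDerivAt (fun s : ℝ => 1 + s * l) l t := by
    simpa using ((hasDerivAt_id t).mul_const l).const_add 1
  have := (Real.hasDerivAt_log h.ne').comp t hu
  simpa [div_eq_inv_mul, Function.comp_def] using this

lemma hd_g1_term (l : ℝ) {t : ℝ} (h : 0 < 1 + t * l) :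
    HasDerivAt (fun s => l / (1 + s * l)) (-(l / (1 + t * l))^2) t := by
  have hu : HasDerivAt (fun s : ℝ => 1 + s * l) l t := by
    simpa using ((hasDerivAt_id t).mul_const l).const_add 1
  have hinv := hu.inv h.ne'
  have heq : (fun s : ℝ => l / (1 + s * l)) = fun s => l * (1 + s * l)⁻¹ := by
    funext s; rw [div_eq_mul_inv]
  rw [heq]
  exact (hinv.const_mul l).congr_deriv (by rw [div_pow]; ring)

/-- Key scalar convexity lemma. -/
lemma key_scalar {n : ℕ} (lam : Fin n → ℝ) (K : ℝ)
    (hpos : ∀ t ∈ Set.Icc (0:ℝ) 1, ∀ k, 0 < 1 + t * lam k)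
    (hbound : ∀ t ∈ Set.Icc (0:ℝ) 1, ∑ k, (lam k / (1 + t * lam k))^2 ≤ 2*K)
    {a b : ℝ} (ha : 0 ≤ a) (hb : 0 ≤ b) (hab : a + b = 1) :
    ∑ k, Real.log (1 + b * lam k) ≤ b * (∑ k, Real.log (1 + lam k)) + a*b*K := by
  set g : ℝ → ℝ := fun t => (∑ k, Real.log (1 + t * lam k)) + K * t^2 with hg
  set g1 : ℝ → ℝ := fun t => (∑ k, lam k / (1 + t * lam k)) + K * (2*t) with hg1
  set g2 : ℝ → ℝ := fun t => (∑ k, -(lam k / (1 + t * lam k))^2) + 2*K with hg2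
  have hDg : ∀ t ∈ Set.Icc (0:ℝ) 1, HasDerivAt g (g1 t) t := by
    intro t ht
    apply HasDerivAt.add
    · exact HasDerivAt.fun_sum fun k _ => hd_log_term (lam k) (hpos t ht k)
    · simpa using ((hasDerivAt_pow 2 t).const_mul K)
  have hDg1 : ∀ t ∈ Set.Icc (0:ℝ) 1, HasDerivAt g1 (g2 t) t := by
    intro t ht
    apply HasDerivAt.add
    · exact HasDerivAt.fun_sum fun k _ => hd_g1_term (lam k) (hpos t ht k)
    · simpa [mul_comm] using ((hasDerivAt_id t).const_mul 2).const_mul K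
  have hIoo : Set.Ioo (0:ℝ) 1 ⊆ Set.Icc 0 1 := Set.Ioo_subset_Icc_self
  have hderiv_eq : ∀ t ∈ Set.Ioo (0:ℝ) 1, deriv g t = g1 t := fun t ht =>
    (hDg t (hIoo ht)).deriv
  have hconv : ConvexOn ℝ (Set.Icc (0:ℝ) 1) g := by
    apply convexOn_of_deriv2_nonneg (convex_Icc 0 1)
    · -- continuity
      intro t ht
      exact ((hDg t ht).continuousAt).continuousWithinAt
    · intro t ht
      rw [interior_Icc] at ht
      exact ((hDg t (hIoo ht)).differentiableAt).differentiableWithinAt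
    · intro t ht
      rw [interior_Icc] at ht
      have : HasDerivAt (deriv g) (g2 t) t := by
        apply (hDg1 t (hIoo ht)).congr_of_eventuallyEq
        filter_upwards [isOpen_Ioo.mem_nhds ht] with s hs
        exact hderiv_eq s hs
      exact this.differentiableAt.differentiableWithinAt
    · intro t ht
      rw [interior_Icc] at ht
      have hd2 : deriv (deriv g) t = g2 t := by
        have : HasDerivAt (deriv g) (g2 t) t := by
          apply (hDg1 t (hIoo ht)).congr_of_eventuallyEq
          filter_upwards [isOpen_Ioo.mem_nhds ht] with s hs
          exact hderiv_eq s hs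
        exact this.deriv
      have : deriv^[2] g t = g2 t := by
        rw [Function.iterate_succ, Function.iterate_one, Function.comp_apply, hd2]
      rw [this, hg2]
      have hb2 := hbound t (hIoo ht)
      simp only [Finset.sum_neg_distrib]
      linarith [hbound t (hIoo ht)]
  -- apply convexity at points 0, 1
  have h0 : (0:ℝ) ∈ Set.Icc (0:ℝ) 1 := by constructor <;> norm_num
  have h1 : (1:ℝ) ∈ Set.Icc (0:ℝ) 1 := by constructor <;> norm_num
  have := hconv.2 h0 h1 ha hb hab
  simp only [smul_eq_mul, mul_zero, mul_one, zero_add] at this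
  have hg0 : g 0 = 0 := by simp [hg]
  have hgb : g b = (∑ k, Real.log (1 + b * lam k)) + K * b^2 := rfl
  have hg1v : g 1 = (∑ k, Real.log (1 + lam k)) + K := by simp [hg]
  rw [hgb] at this
  rw [hg0, hg1v] at this
  have ha' : a = 1 - b := by linarith
  have key : a*b*K = b*K - K*b^2 := by rw [ha']; ring
  linarith [this]
end S5


section Basics
variable {n q r : ℕ}

/-- squared-norm trick: Cauchy-Schwarz for dotProduct, squared form. -/
lemma dot_sq_le (x y : Fin n → ℝ) : (x ⬝ᵥ y)^2 ≤ (∑ i, x i ^2) * ∑ i, y i ^2 :=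
  Finset.sum_mul_sq_le_sq_mul_sq _ _ _

/-- Frobenius squared norm -/
def frob {a b : ℕ} (M : Matrix (Fin a) (Fin b) ℝ) : ℝ := ∑ i, ∑ j, (M i j)^2

lemma frob_nonneg {a b : ℕ} (M : Matrix (Fin a) (Fin b) ℝ) : 0 ≤ frob M := by
  apply Finset.sum_nonneg; intro i _; apply Finset.sum_nonneg; intro j _; positivity

lemma frob_transpose {a b : ℕ} (M : Matrix (Fin a) (Fin b) ℝ) : frob Mᵀ = frob M := by
  rw [frob, frob, Finset.sum_comm]; rfl

lemma mul_apply_col {a b c : ℕ} (M : Matrix (Fin a) (Fin b) ℝ) (X : Matrix (Fin b) (Fin c) ℝ)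
    (i : Fin a) (j : Fin c) : (M * X) i j = (M *ᵥ (fun k => X k j)) i := by
  simp [Matrix.mul_apply, Matrix.mulVec, dotProduct]

/-- if `∀ v, ∑ (M *ᵥ v)² ≤ c * ∑ v²` then `frob (M * X) ≤ c * frob X`. -/
lemma frob_mul_left {a b c : ℕ} {M : Matrix (Fin a) (Fin b) ℝ} {X : Matrix (Fin b) (Fin c) ℝ}
    {cst : ℝ} (h : ∀ v : Fin b → ℝ, (∑ i, ((M *ᵥ v) i)^2) ≤ cst * ∑ j, (v j)^2) :
    frob (M * X) ≤ cst * frob X := by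
  have : frob (M * X) = ∑ j : Fin c, ∑ i : Fin a, ((M *ᵥ (fun k => X k j)) i)^2 := by
    rw [frob, Finset.sum_comm]
    exact Finset.sum_congr rfl fun j _ => Finset.sum_congr rfl fun i _ => by
      rw [mul_apply_col]
  rw [this, frob, Finset.mul_sum]
  rw [show (∑ i : Fin b, cst * ∑ j : Fin c, X i j ^2) = ∑ j : Fin c, cst * ∑ i : Fin b, X i j ^2 by
    simp_rw [Finset.mul_sum]; exact Finset.sum_comm ..]
  exact Finset.sum_le_sum fun j _ => h _

lemma frob_mul_right {a b c : ℕ} {M : Matrix (Fin b) (Fin c) ℝ} {X : Matrix (Fin a) (Fin b) ℝ}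
    {cst : ℝ} (h : ∀ v : Fin b → ℝ, (∑ i, ((Mᵀ *ᵥ v) i)^2) ≤ cst * ∑ j, (v j)^2) :
    frob (X * M) ≤ cst * frob X := by
  have := frob_mul_left (X := Xᵀ) h
  rwa [← Matrix.transpose_mul, frob_transpose, frob_transpose] at this

/-- the CS trick: a bound on `Mᵀ` gives a bound on `M`. -/
lemma mulVec_sq_bound_of_transpose {a : ℕ} {M : Matrix (Fin a) (Fin a) ℝ} {c : ℝ}
    (hc : 0 ≤ c) (h : ∀ v : Fin a → ℝ, (∑ i, ((Mᵀ *ᵥ v) i)^2) ≤ c * ∑ j, (v j)^2) :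
    ∀ v : Fin a → ℝ, (∑ i, ((M *ᵥ v) i)^2) ≤ c * ∑ j, (v j)^2 := by
  intro v
  set s : ℝ := ∑ i, ((M *ᵥ v) i)^2 with hs
  have hs0 : 0 ≤ s := Finset.sum_nonneg fun i _ => sq_nonneg _
  rcases eq_or_lt_of_le hs0 with h0 | h0
  · exact (h0.symm ▸ (by positivity))
  -- s = v ⬝ᵥ (Mᵀ *ᵥ (M *ᵥ v))
  have key : s = v ⬝ᵥ (Mᵀ *ᵥ (M *ᵥ v)) := by
    have : s = (M *ᵥ v) ⬝ᵥ (M *ᵥ v) := by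
      simp [hs, dotProduct, sq]
    rw [this, Matrix.dotProduct_mulVec v Mᵀ, Matrix.vecMul_transpose]
  have hcs : s^2 ≤ (∑ j, (v j)^2) * (c * s) := by
    calc s^2 = (v ⬝ᵥ (Mᵀ *ᵥ (M *ᵥ v)))^2 := by rw [key]
    _ ≤ (∑ j, (v j)^2) * ∑ i, ((Mᵀ *ᵥ (M *ᵥ v)) i)^2 := dot_sq_le _ _
    _ ≤ (∑ j, (v j)^2) * (c * s) := by
        apply mul_le_mul_of_nonneg_left (h _) (Finset.sum_nonneg fun i _ => sq_nonneg _)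
  nlinarith [hcs, h0]

end Basics

section S6
variable {n q : ℕ}

lemma quad_conj (G X : Matrix (Fin n) (Fin n) ℝ) (v : Vec n) :
    (Gᵀ *ᵥ v) ⬝ᵥ (X *ᵥ (Gᵀ *ᵥ v)) = v ⬝ᵥ ((G * X * Gᵀ) *ᵥ v) := by
  rw [show G * X * Gᵀ = G * (X * Gᵀ) from Matrix.mul_assoc G X Gᵀ]
  rw [← Matrix.mulVec_mulVec, Matrix.dotProduct_mulVec v G, ← Matrix.mulVec_transpose,
    ← Matrix.mulVec_mulVec]

lemma frob_diagonal (f : Vec n) : frob (Matrix.diagonal f) = ∑ k, (f k)^2 := by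
  rw [frob]
  refine Finset.sum_congr rfl fun i _ => ?_
  rw [Finset.sum_eq_single i]
  · simp
  · intro j _ hj; simp [Matrix.diagonal_apply, Ne.symm hj]
  · simp

lemma transpose_B (Z : Matrix (Fin n) (Fin q) ℝ) (f : Vec q) :
    (Z * Matrix.diagonal f * Zᵀ)ᵀ = Z * Matrix.diagonal f * Zᵀ := by
  rw [Matrix.transpose_mul, Matrix.transpose_mul, Matrix.transpose_transpose,
    Matrix.diagonal_transpose, Matrix.mul_assoc]

open scoped MatrixOrder in
/-- Main log-det weak-convexity inequality. -/
lemma logdet_key (Z : Matrix (Fin n) (Fin q) ℝ) {Λ : Matrix (Fin n) (Fin n) ℝ}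
    (hΛ : Λ.PosDef) (hμpos : 0 < minEig Λ)
    (γ₁ γ₂ : Vec q) (h₁ : ∀ j, 0 ≤ γ₁ j) (h₂ : ∀ j, 0 ≤ γ₂ j)
    {a b : ℝ} (ha : 0 ≤ a) (hb : 0 ≤ b) (hab : a + b = 1) :
    Real.log (Z * Matrix.diagonal (a • γ₁ + b • γ₂) * Zᵀ + Λ).det
      ≤ a * Real.log (Z * Matrix.diagonal γ₁ * Zᵀ + Λ).det
        + b * Real.log (Z * Matrix.diagonal γ₂ * Zᵀ + Λ).det
        + a * b * (((minEig Λ)^2)⁻¹ * (opNorm Z)^4 / 2 * ∑ j, (γ₂ j - γ₁ j)^2) := by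
  classical
  set μ := minEig Λ with hμdef
  set σ := opNorm Z with hσdef
  set d : Vec q := fun j => γ₂ j - γ₁ j with hd
  set A : Matrix (Fin n) (Fin n) ℝ := Z * Matrix.diagonal γ₁ * Zᵀ + Λ with hA
  set B : Matrix (Fin n) (Fin n) ℝ := Z * Matrix.diagonal d * Zᵀ with hB
  -- affine representation
  have haff : ∀ t : ℝ, A + t • B = Z * Matrix.diagonal (fun j => γ₁ j + t * d j) * Zᵀ + Λ := by
    intro t
    have hdg : Matrix.diagonal (fun j => γ₁ j + t * d j)
        = Matrix.diagonal γ₁ + t • Matrix.diagonal d := by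
      ext i j
      rcases eq_or_ne i j with rfl | hij
      · simp
      · simp [Matrix.diagonal_apply_ne _ hij]
    rw [hdg, Matrix.mul_add, Matrix.add_mul, hA, hB, Matrix.mul_smul, Matrix.smul_mul]
    abel
  have hcoord : ∀ t ∈ Set.Icc (0:ℝ) 1, ∀ j, 0 ≤ γ₁ j + t * d j := by
    intro t ht j
    have h1j := h₁ j; have h2j := h₂ j
    have he : γ₁ j + t * d j = (1 - t) * γ₁ j + t * γ₂ j := by rw [hd]; ring
    rw [he]
    have ht1 := ht.1; have ht2 := ht.2
    nlinarith
  have hpd : ∀ t ∈ Set.Icc (0:ℝ) 1, (A + t • B).PosDef := by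
    intro t ht; rw [haff t]; exact omega_posdef Z hΛ (hcoord t ht)
  have hlower : ∀ t ∈ Set.Icc (0:ℝ) 1, ∀ x : Vec n,
      μ * ∑ j, (x j)^2 ≤ x ⬝ᵥ (A + t • B) *ᵥ x := by
    intro t ht x; rw [haff t]; exact omega_quad_lower Z hΛ (hcoord t ht) x
  have h0mem : (0:ℝ) ∈ Set.Icc (0:ℝ) 1 := by constructor <;> norm_num
  have h1mem : (1:ℝ) ∈ Set.Icc (0:ℝ) 1 := by constructor <;> norm_num
  have hbmem : b ∈ Set.Icc (0:ℝ) 1 := ⟨hb, by linarith⟩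
  have hApd : A.PosDef := by
    have := hpd 0 h0mem; rwa [zero_smul, add_zero] at this
  -- square root of A
  set S : Matrix (Fin n) (Fin n) ℝ := CFC.sqrt A with hSdef
  have hSS : S * S = A := CFC.sqrt_mul_sqrt_self A hApd.posSemidef.nonneg
  have hSsymm : Sᵀ = S := real_symm (CFC.sqrt_nonneg A).posSemidef.1
  have hSdetu : IsUnit S.det := by
    have hdetA : 0 < A.det := hApd.det_pos
    have hmm : S.det * S.det = A.det := by rw [← Matrix.det_mul, hSS]
    have hne : S.det ≠ 0 := by intro h0; rw [h0, mul_zero] at hmm; exact hdetA.ne hmm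
    exact hne.isUnit
  set C : Matrix (Fin n) (Fin n) ℝ := S⁻¹ * B * S⁻¹ with hC
  have hBsymm : Bᵀ = B := by rw [hB]; exact transpose_B Z d
  have hSinv : (S⁻¹)ᵀ = S⁻¹ := by rw [Matrix.transpose_nonsing_inv, hSsymm]
  have hCherm : C.IsHermitian := by
    show Cᴴ = C
    rw [Matrix.conjTranspose_eq_transpose_of_trivial, hC]
    simp only [Matrix.transpose_mul, hSinv, hBsymm, Matrix.mul_assoc]
  set lam : Fin n → ℝ := hCherm.eigenvalues with hlam
  set U : Matrix (Fin n) (Fin n) ℝ := (hCherm.eigenvectorUnitary : Matrix (Fin n) (Fin n) ℝ) with hUdef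
  have hspec : C = U * Matrix.diagonal lam * Uᵀ := by
    have hsp := hCherm.spectral_theorem
    rwa [Unitary.conjStarAlgAut_apply, Matrix.star_eq_conjTranspose,
      Matrix.conjTranspose_eq_transpose_of_trivial,
      show (RCLike.ofReal ∘ hCherm.eigenvalues : Fin n → ℝ) = lam by
        funext k; simp [RCLike.ofReal, hlam]] at hsp
  have hUU : U * Uᵀ = 1 := by
    have h := (Matrix.mem_unitaryGroup_iff).mp hCherm.eigenvectorUnitary.2
    rwa [Matrix.star_eq_conjTranspose, Matrix.conjTranspose_eq_transpose_of_trivial] at h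
  set R : Matrix (Fin n) (Fin n) ℝ := S * U with hR
  have hRt : Rᵀ = Uᵀ * S := by rw [hR, Matrix.transpose_mul, hSsymm]
  have hRRt : R * Rᵀ = A := by
    rw [hR, hRt, Matrix.mul_assoc, ← Matrix.mul_assoc U, hUU, Matrix.one_mul, hSS]
  have hRdetu : IsUnit R.det := by
    have hUdet : IsUnit U.det := by
      refine IsUnit.of_mul_eq_one Uᵀ.det ?_
      rw [← Matrix.det_mul, hUU, Matrix.det_one]
    rw [hR, Matrix.det_mul]
    exact hSdetu.mul hUdet
  have hRtdetu : IsUnit Rᵀ.det := by rwa [Matrix.det_transpose]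
  have hBrep : B = R * Matrix.diagonal lam * Rᵀ := by
    have hSCS : S * C * S = B := by
      rw [hC, ← Matrix.mul_assoc, ← Matrix.mul_assoc,
        Matrix.mul_nonsing_inv _ hSdetu, Matrix.one_mul, Matrix.mul_assoc,
        Matrix.nonsing_inv_mul _ hSdetu, Matrix.mul_one]
    rw [← hSCS, hspec, hR, hRt]
    simp only [Matrix.mul_assoc]
  have hrep : ∀ t : ℝ, A + t • B = R * Matrix.diagonal (fun k => 1 + t * lam k) * Rᵀ := by
    intro t
    have hdg : Matrix.diagonal (fun k => 1 + t * lam k)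
        = 1 + t • Matrix.diagonal lam := by
      ext i j
      rcases eq_or_ne i j with rfl | hij
      · simp
      · simp [Matrix.diagonal_apply_ne _ hij, Matrix.one_apply_ne hij]
    rw [hdg, Matrix.mul_add, Matrix.add_mul, Matrix.mul_one, hRRt, hBrep,
      Matrix.mul_smul, Matrix.smul_mul]
  have hdet : ∀ t : ℝ, (A + t • B).det = R.det^2 * ∏ k, (1 + t * lam k) := by
    intro t
    rw [hrep t, Matrix.det_mul, Matrix.det_mul, Matrix.det_transpose, Matrix.det_diagonal]
    ring
  -- congruence computations
  have hcong : ∀ (X D : Matrix (Fin n) (Fin n) ℝ), X = R * D * Rᵀ →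
      R⁻¹ * X * (R⁻¹)ᵀ = D := by
    intro X D hX
    rw [hX, Matrix.transpose_nonsing_inv]
    calc R⁻¹ * (R * D * Rᵀ) * (Rᵀ)⁻¹
        = (R⁻¹ * R) * (D * (Rᵀ * (Rᵀ)⁻¹)) := by simp only [Matrix.mul_assoc]
      _ = D := by
          rw [Matrix.nonsing_inv_mul _ hRdetu, Matrix.mul_nonsing_inv _ hRtdetu,
            Matrix.one_mul, Matrix.mul_one]
  -- positivity of 1 + t * lam k on [0,1]
  have hdpos : ∀ t ∈ Set.Icc (0:ℝ) 1, ∀ k, 0 < 1 + t * lam k := by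
    intro t ht k
    have hcongA := hcong (A + t • B) (Matrix.diagonal (fun k => 1 + t * lam k)) (hrep t)
    have hvne : (R⁻¹)ᵀ *ᵥ (Pi.single k 1 : Vec n) ≠ (0 : Vec n) := by
      rw [Matrix.transpose_nonsing_inv]
      intro h0
      have h1 : Rᵀ *ᵥ ((Rᵀ)⁻¹ *ᵥ (Pi.single k 1 : Vec n)) = Rᵀ *ᵥ (0 : Vec n) := by rw [h0]
      rw [Matrix.mulVec_mulVec, Matrix.mul_nonsing_inv _ hRtdetu, Matrix.one_mulVec,
        Matrix.mulVec_zero] at h1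
      have := congr_fun h1 k
      simp at this
    have hquad : (0:ℝ) < ((R⁻¹)ᵀ *ᵥ (Pi.single k 1 : Vec n)) ⬝ᵥ
        ((A + t • B) *ᵥ ((R⁻¹)ᵀ *ᵥ (Pi.single k 1 : Vec n))) :=
      posdef_quad_pos (hpd t ht) hvne
    have hcalc : ((R⁻¹)ᵀ *ᵥ (Pi.single k 1 : Vec n)) ⬝ᵥ
        ((A + t • B) *ᵥ ((R⁻¹)ᵀ *ᵥ (Pi.single k 1 : Vec n))) = 1 + t * lam k := by
      rw [quad_conj R⁻¹ (A + t • B) (Pi.single k 1), hcongA]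
      simp [Matrix.mulVec_diagonal]
    rwa [hcalc] at hquad
  -- the uniform spectral bound
  have hsum : ∀ t ∈ Set.Icc (0:ℝ) 1,
      ∑ k, (lam k / (1 + t * lam k))^2 ≤ 2 * ((μ^2)⁻¹ * σ^4 / 2 * ∑ j, (d j)^2) := by
    intro t ht
    set dv : Fin n → ℝ := fun k => 1 + t * lam k with hdv
    have hdvpos : ∀ k, 0 < dv k := hdpos t ht
    set F : Matrix (Fin n) (Fin n) ℝ :=
      Matrix.diagonal (fun k => (Real.sqrt (dv k))⁻¹) with hF
    have hFt : Fᵀ = F := Matrix.diagonal_transpose _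
    set G : Matrix (Fin n) (Fin n) ℝ := F * R⁻¹ with hG
    have hGt : Gᵀ = (R⁻¹)ᵀ * F := by rw [hG, Matrix.transpose_mul, hFt]
    have hsandwich : ∀ (X D : Matrix (Fin n) (Fin n) ℝ), X = R * D * Rᵀ →
        G * X * Gᵀ = F * D * F := by
      intro X D hX
      have h1 := hcong X D hX
      rw [hG, hGt]
      calc F * R⁻¹ * X * ((R⁻¹)ᵀ * F) = F * (R⁻¹ * X * (R⁻¹)ᵀ) * F := by
            simp only [Matrix.mul_assoc]
        _ = F * D * F := by rw [h1]
    have hGA : G * (A + t • B) * Gᵀ = 1 := by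
      rw [hsandwich (A + t • B) _ (hrep t), hF, Matrix.diagonal_mul_diagonal,
        Matrix.diagonal_mul_diagonal]
      rw [show (fun k => (Real.sqrt (dv k))⁻¹ * (1 + t * lam k) * (Real.sqrt (dv k))⁻¹)
          = fun _ => (1:ℝ) from ?_, Matrix.diagonal_one]
      funext k
      have hk := hdvpos k
      have hs : Real.sqrt (dv k) ≠ 0 := (Real.sqrt_pos.mpr hk).ne'
      have : (1 + t * lam k) = Real.sqrt (dv k) * Real.sqrt (dv k) :=
        (Real.mul_self_sqrt hk.le).symm
      rw [this]
      field_simp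
    have hGB : G * B * Gᵀ = Matrix.diagonal (fun k => lam k / dv k) := by
      rw [hsandwich B _ hBrep, hF, Matrix.diagonal_mul_diagonal, Matrix.diagonal_mul_diagonal]
      refine congrArg Matrix.diagonal (funext fun k => ?_)
      have hk := hdvpos k
      have h2 : (Real.sqrt (dv k))⁻¹ * (Real.sqrt (dv k))⁻¹ = (dv k)⁻¹ := by
        rw [← mul_inv, Real.mul_self_sqrt hk.le]
      rw [div_eq_mul_inv, ← h2]
      ring
    -- bound on Gᵀ
    have hGtb : ∀ v : Vec n, (∑ i, ((Gᵀ *ᵥ v) i)^2) ≤ μ⁻¹ * ∑ j, (v j)^2 := by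
      intro v
      have h1 := hlower t ht (Gᵀ *ᵥ v)
      have h2 : (Gᵀ *ᵥ v) ⬝ᵥ ((A + t • B) *ᵥ (Gᵀ *ᵥ v)) = v ⬝ᵥ v := by
        rw [quad_conj G (A + t • B) v, hGA, Matrix.one_mulVec]
      have h3 : v ⬝ᵥ v = ∑ j, (v j)^2 := by simp [dotProduct, sq]
      have h4 : μ * (∑ i, ((Gᵀ *ᵥ v) i)^2) ≤ ∑ j, (v j)^2 := by
        rw [← h3, ← h2]; exact h1
      calc (∑ i, ((Gᵀ *ᵥ v) i)^2) = μ⁻¹ * (μ * ∑ i, ((Gᵀ *ᵥ v) i)^2) := by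
            field_simp
        _ ≤ μ⁻¹ * ∑ j, (v j)^2 :=
            mul_le_mul_of_nonneg_left h4 (inv_nonneg.mpr hμpos.le)
    have hGb : ∀ v : Vec n, (∑ i, ((G *ᵥ v) i)^2) ≤ μ⁻¹ * ∑ j, (v j)^2 :=
      mulVec_sq_bound_of_transpose (inv_nonneg.mpr hμpos.le) hGtb
    -- Frobenius chain
    have e1 : ∑ k, (lam k / dv k)^2 = frob (G * B * Gᵀ) := by
      rw [hGB, frob_diagonal]
    have e2 : frob (G * B * Gᵀ) ≤ μ⁻¹ * frob (B * Gᵀ) := by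
      rw [Matrix.mul_assoc]; exact frob_mul_left hGb
    have e3 : frob (B * Gᵀ) = frob (G * B) := by
      rw [← frob_transpose (B * Gᵀ), Matrix.transpose_mul, Matrix.transpose_transpose, hBsymm]
    have e4 : frob (G * B) ≤ μ⁻¹ * frob B := frob_mul_left hGb
    have e5 : frob B ≤ σ^2 * (σ^2 * ∑ j, (d j)^2) := by
      have f1 : frob B ≤ σ^2 * frob (Matrix.diagonal d * Zᵀ) := by
        rw [hB, Matrix.mul_assoc]
        exact frob_mul_left (fun v => sum_sq_mulVec_le Z v)
      have f2 : frob (Matrix.diagonal d * Zᵀ) = frob (Z * Matrix.diagonal d) := by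
        rw [← frob_transpose (Matrix.diagonal d * Zᵀ), Matrix.transpose_mul,
          Matrix.transpose_transpose, Matrix.diagonal_transpose]
      have f3 : frob (Z * Matrix.diagonal d) ≤ σ^2 * frob (Matrix.diagonal d) :=
        frob_mul_left (fun v => sum_sq_mulVec_le Z v)
      rw [frob_diagonal] at f3
      calc frob B ≤ σ^2 * frob (Matrix.diagonal d * Zᵀ) := f1
        _ = σ^2 * frob (Z * Matrix.diagonal d) := by rw [f2]
        _ ≤ σ^2 * (σ^2 * ∑ j, (d j)^2) :=
            mul_le_mul_of_nonneg_left f3 (sq_nonneg σ)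
    have hfrobB : 0 ≤ frob B := frob_nonneg B
    have hμinv : 0 ≤ μ⁻¹ := inv_nonneg.mpr hμpos.le
    have chain : ∑ k, (lam k / dv k)^2 ≤ μ⁻¹ * (μ⁻¹ * (σ^2 * (σ^2 * ∑ j, (d j)^2))) := by
      calc ∑ k, (lam k / dv k)^2 = frob (G * B * Gᵀ) := e1
        _ ≤ μ⁻¹ * frob (B * Gᵀ) := e2
        _ = μ⁻¹ * frob (G * B) := by rw [e3]
        _ ≤ μ⁻¹ * (μ⁻¹ * frob B) := mul_le_mul_of_nonneg_left e4 hμinv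
        _ ≤ μ⁻¹ * (μ⁻¹ * (σ^2 * (σ^2 * ∑ j, (d j)^2))) := by
            apply mul_le_mul_of_nonneg_left _ hμinv
            exact mul_le_mul_of_nonneg_left e5 hμinv
    have heq : μ⁻¹ * (μ⁻¹ * (σ^2 * (σ^2 * ∑ j, (d j)^2)))
        = 2 * ((μ^2)⁻¹ * σ^4 / 2 * ∑ j, (d j)^2) := by
      have hμne : μ ≠ 0 := hμpos.ne'
      field_simp
    rw [← heq]
    exact chain
  -- scalar convexity
  set K : ℝ := (μ^2)⁻¹ * σ^4 / 2 * ∑ j, (d j)^2 with hK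
  have hscalar := key_scalar lam K hdpos hsum ha hb hab
  -- log det identities
  have hRdet2 : (0:ℝ) < R.det^2 := by
    have : R.det ≠ 0 := hRdetu.ne_zero
    positivity
  have hlogdet : ∀ t ∈ Set.Icc (0:ℝ) 1,
      Real.log (A + t • B).det = Real.log (R.det^2) + ∑ k, Real.log (1 + t * lam k) := by
    intro t ht
    have hprodpos : (0:ℝ) < ∏ k, (1 + t * lam k) :=
      Finset.prod_pos (fun k _ => hdpos t ht k)
    rw [hdet t, Real.log_mul hRdet2.ne' hprodpos.ne',
      Real.log_prod (fun k _ => (hdpos t ht k).ne')]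
  -- endpoints
  have hend0 : Z * Matrix.diagonal γ₁ * Zᵀ + Λ = A + (0:ℝ) • B := by
    rw [zero_smul, add_zero]
  have hend1 : Z * Matrix.diagonal γ₂ * Zᵀ + Λ = A + (1:ℝ) • B := by
    have hfun : (fun j => γ₁ j + 1 * d j) = γ₂ := by
      funext j; simp only [hd]; ring
    rw [haff 1, hfun]
  have hendb : Z * Matrix.diagonal (a • γ₁ + b • γ₂) * Zᵀ + Λ = A + b • B := by
    have hfun : (fun j => γ₁ j + b * d j) = a • γ₁ + b • γ₂ := by
      funext j
      simp only [hd, Pi.add_apply, Pi.smul_apply, smul_eq_mul]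
      have ha' : a = 1 - b := by linarith
      rw [ha']; ring
    rw [haff b, hfun]
  rw [hendb, hend1]
  have hlog0 : ∑ k, Real.log (1 + 0 * lam k) = 0 := by
    refine Finset.sum_eq_zero fun k _ => ?_
    rw [show (1:ℝ) + 0 * lam k = 1 by ring, Real.log_one]
  have hv0 : Real.log A.det = Real.log (R.det^2) := by
    have h := hlogdet 0 h0mem
    rw [zero_smul, add_zero] at h
    rw [h, hlog0, add_zero]
  have hvb := hlogdet b hbmem
  have hv1 : Real.log (A + (1:ℝ) • B).det
      = Real.log (R.det^2) + ∑ k, Real.log (1 + lam k) := by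
    rw [hlogdet 1 h1mem]
    congr 1
    refine Finset.sum_congr rfl fun k _ => ?_
    rw [show (1:ℝ) + 1 * lam k = 1 + lam k by ring]
  rw [hvb, hv1, hv0]
  have ha' : a = 1 - b := by linarith
  calc Real.log (R.det^2) + ∑ k, Real.log (1 + b * lam k)
      ≤ Real.log (R.det^2) + (b * (∑ k, Real.log (1 + lam k)) + a*b*K) := by
        linarith [hscalar]
    _ = a * Real.log (R.det^2)
        + b * (Real.log (R.det^2) + ∑ k, Real.log (1 + lam k)) + a*b*K := by
        rw [ha']; ring
end S6

section S7
open Matrix Real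
variable {m p q : ℕ}

lemma ereal_mul_nonneg_ne_bot {a : ℝ} (ha : 0 ≤ a) {x : EReal} (hx : x ≠ ⊥) :
    (a : EReal) * x ≠ ⊥ := by
  induction x with
  | bot => exact absurd rfl hx
  | coe r => rw [← EReal.coe_mul]; exact EReal.coe_ne_bot _
  | top =>
    rcases eq_or_lt_of_le ha with h0 | hpos
    · rw [← h0]; simp
    · rw [EReal.coe_mul_top_of_pos hpos]; simp

lemma phiBar_ne_bot (μ : ℝ) {k : ℕ} (γ : Vec k) : phiBar μ γ ≠ ⊥ := by
  rw [phiBar]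
  split_ifs <;> first | exact EReal.coe_ne_bot _ | simp

lemma phiBar_zero_eval {k : ℕ} (γ : Vec k) (h : ∀ j, 0 ≤ γ j) :
    phiBar 0 γ = ((0 : ℝ) : EReal) := by
  rw [phiBar, if_pos rfl, if_pos h, EReal.coe_zero]

lemma phiBar_pos_eval {μ : ℝ} (hμ : 0 < μ) {k : ℕ} (γ : Vec k) (h : ∀ j, 0 < γ j) :
    phiBar μ γ = (((-μ) * ∑ j, Real.log (γ j / μ) : ℝ) : EReal) := by
  rw [phiBar, if_neg hμ.ne', if_pos hμ, if_pos h]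

lemma phiBar_pos_top {μ : ℝ} (hμ : 0 < μ) {k : ℕ} (γ : Vec k) (h : ¬ ∀ j, 0 < γ j) :
    phiBar μ γ = ⊤ := by
  rw [phiBar, if_neg hμ.ne', if_pos hμ, if_neg h]

/-- scalar convex-combination identity -/
lemma sq_combo {a b : ℝ} (hab : a + b = 1) (u v : ℝ) :
    (a*u + b*v)^2 = a*u^2 + b*v^2 - a*b*(u-v)^2 := by
  have hb' : b = 1 - a := by linarith
  rw [hb']; ring

lemma sqnorm2_combo {a b : ℝ} (hab : a + b = 1) (x z : Vec p × Vec q) :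
    sqnorm2 (a • x + b • z) = a * sqnorm2 x + b * sqnorm2 z - a*b*sqnorm2 (x - z) := by
  simp only [sqnorm2]
  have h1 : ∀ j, ((a • x + b • z).1 j)^2
      = a * (x.1 j)^2 + b * (z.1 j)^2 - a*b*((x.1 - z.1) j)^2 := by
    intro j
    have : (a • x + b • z).1 j = a * x.1 j + b * z.1 j := rfl
    rw [this, sq_combo hab]
    rfl
  have h2 : ∀ j, ((a • x + b • z).2 j)^2
      = a * (x.2 j)^2 + b * (z.2 j)^2 - a*b*((x.2 - z.2) j)^2 := by
    intro j
    have : (a • x + b • z).2 j = a * x.2 j + b * z.2 j := rfl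
    rw [this, sq_combo hab]
    rfl
  have e1 : ∑ j, ((a • x + b • z).1 j)^2
      = a * ∑ j, (x.1 j)^2 + b * ∑ j, (z.1 j)^2 - a*b*∑ j, ((x.1-z.1) j)^2 := by
    rw [Finset.mul_sum, Finset.mul_sum, Finset.mul_sum, ← Finset.sum_add_distrib,
      ← Finset.sum_sub_distrib]
    exact Finset.sum_congr rfl fun j _ => h1 j
  have e2 : ∑ j, ((a • x + b • z).2 j)^2
      = a * ∑ j, (x.2 j)^2 + b * ∑ j, (z.2 j)^2 - a*b*∑ j, ((x.2-z.2) j)^2 := by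
    rw [Finset.mul_sum, Finset.mul_sum, Finset.mul_sum, ← Finset.sum_add_distrib,
      ← Finset.sum_sub_distrib]
    exact Finset.sum_congr rfl fun j _ => h2 j
  rw [e1, e2]
  have hfst : (x - z).1 = x.1 - z.1 := rfl
  have hsnd : (x - z).2 = x.2 - z.2 := rfl
  rw [hfst, hsnd]
  ring

lemma combo_sub {a b : ℝ} (hab : a + b = 1) (x z w : Vec p × Vec q) :
    (a • x + b • z) - w = a • (x - w) + b • (z - w) := by
  have : a • (x - w) + b • (z - w) = (a • x + b • z) - (a • w + b • w) := by
    rw [smul_sub, smul_sub]; abel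
  rw [this]
  have hw : a • w + b • w = w := by
    rw [← add_smul, hab, one_smul]
  rw [hw]

/-- barrier convexity (real form) -/
lemma barrier_combo {μ : ℝ} (hμ : 0 < μ) {k : ℕ} (γ₁ γ₂ : Vec k)
    (h₁ : ∀ j, 0 < γ₁ j) (h₂ : ∀ j, 0 < γ₂ j)
    {a b : ℝ} (ha : 0 ≤ a) (hb : 0 ≤ b) (hab : a + b = 1) :
    (-μ) * ∑ j, Real.log ((a * γ₁ j + b * γ₂ j) / μ)
      ≤ a * ((-μ) * ∑ j, Real.log (γ₁ j / μ)) + b * ((-μ) * ∑ j, Real.log (γ₂ j / μ)) := by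
  have key : ∀ j, a * Real.log (γ₁ j / μ) + b * Real.log (γ₂ j / μ)
      ≤ Real.log ((a * γ₁ j + b * γ₂ j) / μ) := by
    intro j
    have hu : γ₁ j / μ ∈ Set.Ioi (0:ℝ) := div_pos (h₁ j) hμ
    have hv : γ₂ j / μ ∈ Set.Ioi (0:ℝ) := div_pos (h₂ j) hμ
    have := strictConcaveOn_log_Ioi.concaveOn.2 hu hv ha hb hab
    simp only [smul_eq_mul] at this
    have harg : a * (γ₁ j / μ) + b * (γ₂ j / μ) = (a * γ₁ j + b * γ₂ j) / μ := by
      field_simp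
    rwa [harg] at this
  have hsum : ∑ j, (a * Real.log (γ₁ j / μ) + b * Real.log (γ₂ j / μ))
      ≤ ∑ j, Real.log ((a * γ₁ j + b * γ₂ j) / μ) :=
    Finset.sum_le_sum fun j _ => key j
  rw [Finset.sum_add_distrib, ← Finset.mul_sum, ← Finset.mul_sum] at hsum
  nlinarith [hsum, hμ]

end S7
section S8
open Matrix Real
variable {m p q : ℕ}

lemma nu_summand_nonneg (D : LMEData m p q) (i : Fin m) :
    0 ≤ (1:ℝ)/2 * ((minEig (D.lam i))^2)⁻¹ * (opNorm (D.Z i))^4 := by positivity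

lemma nu_le (D : LMEData m p q) (i : Fin m) :
    (1:ℝ)/2 * ((minEig (D.lam i))^2)⁻¹ * (opNorm (D.Z i))^4 ≤ D.nu := by
  rw [LMEData.nu]
  exact le_ciSup (f := fun i : Fin m => (1:ℝ)/2 * ((minEig (D.lam i))^2)⁻¹ * (opNorm (D.Z i))^4)
    (Set.Finite.bddAbove (Set.finite_range _)) i

lemma nu_nonneg (D : LMEData m p q) (hm : 0 < m) : 0 ≤ D.nu :=
  le_trans (nu_summand_nonneg D ⟨0, hm⟩) (nu_le D ⟨0, hm⟩)

lemma etabar_nonneg (D : LMEData m p q) (hm : 0 < m) : 0 ≤ D.etabar :=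
  mul_nonneg (nu_nonneg D hm) (Nat.cast_nonneg m)

lemma L_combo (D : LMEData m p q) (hm : 0 < m) (hn : ∀ i, 0 < D.n i)
    (hlam : ∀ i, (D.lam i).PosDef)
    (x z : Vec p × Vec q) (hx : ∀ j, 0 ≤ x.2 j) (hz : ∀ j, 0 ≤ z.2 j)
    {a b : ℝ} (ha : 0 ≤ a) (hb : 0 ≤ b) (hab : a + b = 1) :
    D.L (a • x + b • z).1 (a • x + b • z).2
      ≤ a * D.L x.1 x.2 + b * D.L z.1 z.2
        + D.etabar / 2 * (a * b * sqnorm2 (x - z)) := by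
  classical
  set Sd : ℝ := ∑ j, (z.2 j - x.2 j)^2 with hSd
  have hc1 : (a • x + b • z).1 = a • x.1 + b • z.1 := rfl
  have hc2 : (a • x + b • z).2 = a • x.2 + b • z.2 := rfl
  have hc2pos : ∀ j, 0 ≤ (a • x.2 + b • z.2) j := by
    intro j
    have : (a • x.2 + b • z.2) j = a * x.2 j + b * z.2 j := rfl
    rw [this]
    have := hx j; have := hz j
    positivity
  -- term notations
  set Tx : Fin m → ℝ := fun i =>
    (1:ℝ)/2 * ((D.y i - D.X i *ᵥ x.1) ⬝ᵥ ((D.Omega (Matrix.diagonal x.2) i)⁻¹ *ᵥ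
      (D.y i - D.X i *ᵥ x.1)))
    + (1:ℝ)/2 * Real.log (D.Omega (Matrix.diagonal x.2) i).det with hTx
  set Tz : Fin m → ℝ := fun i =>
    (1:ℝ)/2 * ((D.y i - D.X i *ᵥ z.1) ⬝ᵥ ((D.Omega (Matrix.diagonal z.2) i)⁻¹ *ᵥ
      (D.y i - D.X i *ᵥ z.1)))
    + (1:ℝ)/2 * Real.log (D.Omega (Matrix.diagonal z.2) i).det with hTz
  set Tc : Fin m → ℝ := fun i =>
    (1:ℝ)/2 * ((D.y i - D.X i *ᵥ (a • x + b • z).1) ⬝ᵥ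
      ((D.Omega (Matrix.diagonal (a • x + b • z).2) i)⁻¹ *ᵥ
        (D.y i - D.X i *ᵥ (a • x + b • z).1)))
    + (1:ℝ)/2 * Real.log (D.Omega (Matrix.diagonal (a • x + b • z).2) i).det with hTc
  have hLx : D.L x.1 x.2 = ∑ i, Tx i := rfl
  have hLz : D.L z.1 z.2 = ∑ i, Tz i := rfl
  have hLc : D.L (a • x + b • z).1 (a • x + b • z).2 = ∑ i, Tc i := rfl
  -- per index inequality
  have key : ∀ i : Fin m, Tc i ≤ a * Tx i + b * Tz i
      + (1:ℝ)/2 * (a * b * (((minEig (D.lam i))^2)⁻¹ * (opNorm (D.Z i))^4 / 2 * Sd)) := by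
    intro i
    have hΩx : D.Omega (Matrix.diagonal x.2) i
        = D.Z i * Matrix.diagonal x.2 * (D.Z i)ᵀ + D.lam i := rfl
    have hΩz : D.Omega (Matrix.diagonal z.2) i
        = D.Z i * Matrix.diagonal z.2 * (D.Z i)ᵀ + D.lam i := rfl
    have hΩc : D.Omega (Matrix.diagonal (a • x + b • z).2) i
        = D.Z i * Matrix.diagonal (a • x.2 + b • z.2) * (D.Z i)ᵀ + D.lam i := rfl
    have hpdx : (D.Omega (Matrix.diagonal x.2) i).PosDef := by
      rw [hΩx]; exact omega_posdef (D.Z i) (hlam i) hx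
    have hpdz : (D.Omega (Matrix.diagonal z.2) i).PosDef := by
      rw [hΩz]; exact omega_posdef (D.Z i) (hlam i) hz
    have hpdc : (D.Omega (Matrix.diagonal (a • x + b • z).2) i).PosDef := by
      rw [hΩc]; exact omega_posdef (D.Z i) (hlam i) hc2pos
    -- affine matrix combination
    have hdiag : Matrix.diagonal (a • x.2 + b • z.2)
        = a • Matrix.diagonal x.2 + b • Matrix.diagonal z.2 := by
      ext i' j'
      rcases eq_or_ne i' j' with rfl | hij
      · simp
      · simp [Matrix.diagonal_apply_ne _ hij]
    have hΛc : a • D.lam i + b • D.lam i = D.lam i := by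
      rw [← add_smul, hab, one_smul]
    have hcomb : a • (D.Omega (Matrix.diagonal x.2) i) + b • (D.Omega (Matrix.diagonal z.2) i)
        = D.Omega (Matrix.diagonal (a • x + b • z).2) i := by
      rw [hΩx, hΩz, hΩc, hdiag, Matrix.mul_add, Matrix.add_mul, Matrix.mul_smul,
        Matrix.mul_smul, Matrix.smul_mul, Matrix.smul_mul, smul_add, smul_add]
      have hre : a • (D.Z i * Matrix.diagonal x.2 * (D.Z i)ᵀ) + a • D.lam i
          + (b • (D.Z i * Matrix.diagonal z.2 * (D.Z i)ᵀ) + b • D.lam i)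
          = a • (D.Z i * Matrix.diagonal x.2 * (D.Z i)ᵀ)
            + b • (D.Z i * Matrix.diagonal z.2 * (D.Z i)ᵀ)
            + (a • D.lam i + b • D.lam i) := by abel
      rw [hre, hΛc]
    -- residual combination
    have hy : a • D.y i + b • D.y i = D.y i := by rw [← add_smul, hab, one_smul]
    have hr : D.y i - D.X i *ᵥ (a • x + b • z).1
        = a • (D.y i - D.X i *ᵥ x.1) + b • (D.y i - D.X i *ᵥ z.1) := by
      rw [hc1, Matrix.mulVec_add, Matrix.mulVec_smul, Matrix.mulVec_smul]
      rw [smul_sub, smul_sub]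
      rw [show a • D.y i - a • (D.X i *ᵥ x.1) + (b • D.y i - b • (D.X i *ᵥ z.1))
          = (a • D.y i + b • D.y i) - (a • (D.X i *ᵥ x.1) + b • (D.X i *ᵥ z.1)) from by abel,
        hy]
    have hquad := quad_combo hpdx hpdz hpdc ha hb hcomb
      (D.y i - D.X i *ᵥ x.1) (D.y i - D.X i *ᵥ z.1)
    rw [← hr] at hquad
    have hlogdet := logdet_key (D.Z i) (hlam i) (minEig_pos (hn i) (hlam i))
      x.2 z.2 hx hz ha hb hab
    rw [← hΩx, ← hΩz, ← hΩc] at hlogdet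
    rw [hTc, hTx, hTz]
    simp only []
    rw [hc2] at *
    linarith [hquad, hlogdet]
  have hsum := Finset.sum_le_sum (fun i (_ : i ∈ Finset.univ) => key i)
  rw [hLc, hLx, hLz]
  -- bound the constant sum
  have hSd_nonneg : 0 ≤ Sd := Finset.sum_nonneg fun j _ => sq_nonneg _
  have hab0 : 0 ≤ a * b := mul_nonneg ha hb
  have hconst : ∀ i : Fin m,
      (1:ℝ)/2 * (a * b * (((minEig (D.lam i))^2)⁻¹ * (opNorm (D.Z i))^4 / 2 * Sd))
        ≤ (a * b * Sd / 2) * D.nu := by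
    intro i
    have heq : (1:ℝ)/2 * (a * b * (((minEig (D.lam i))^2)⁻¹ * (opNorm (D.Z i))^4 / 2 * Sd))
        = (a * b * Sd / 2) * ((1:ℝ)/2 * ((minEig (D.lam i))^2)⁻¹ * (opNorm (D.Z i))^4) := by
      ring
    rw [heq]
    exact mul_le_mul_of_nonneg_left (nu_le D i) (by positivity)
  have hconstsum : ∑ i : Fin m,
      (1:ℝ)/2 * (a * b * (((minEig (D.lam i))^2)⁻¹ * (opNorm (D.Z i))^4 / 2 * Sd))
        ≤ (m : ℝ) * ((a * b * Sd / 2) * D.nu) := by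
    calc ∑ i : Fin m, (1:ℝ)/2 * (a * b * (((minEig (D.lam i))^2)⁻¹ * (opNorm (D.Z i))^4 / 2 * Sd))
        ≤ ∑ _i : Fin m, (a * b * Sd / 2) * D.nu := Finset.sum_le_sum fun i _ => hconst i
      _ = (m : ℝ) * ((a * b * Sd / 2) * D.nu) := by
          rw [Finset.sum_const, Finset.card_univ, Fintype.card_fin, nsmul_eq_mul]
  have hSd_le : Sd ≤ sqnorm2 (x - z) := by
    rw [sqnorm2, hSd]
    have h2 : ∑ j, (z.2 j - x.2 j)^2 = ∑ j, ((x - z).2 j)^2 := by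
      refine Finset.sum_congr rfl fun j _ => ?_
      have : (x - z).2 j = x.2 j - z.2 j := rfl
      rw [this]; ring
    rw [h2]
    have h1 : 0 ≤ ∑ j, ((x - z).1 j)^2 := Finset.sum_nonneg fun j _ => sq_nonneg _
    linarith
  have hfinal : (m : ℝ) * ((a * b * Sd / 2) * D.nu)
      ≤ D.etabar / 2 * (a * b * sqnorm2 (x - z)) := by
    have hmain : (m : ℝ) * ((a * b * Sd / 2) * D.nu) = D.etabar / 2 * (a * b * Sd) := by
      rw [LMEData.etabar]; ring
    rw [hmain]
    apply mul_le_mul_of_nonneg_left _ (by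
      have := etabar_nonneg D hm; linarith)
    exact mul_le_mul_of_nonneg_left hSd_le hab0
  calc ∑ i, Tc i
      ≤ ∑ i, (a * Tx i + b * Tz i
        + (1:ℝ)/2 * (a * b * (((minEig (D.lam i))^2)⁻¹ * (opNorm (D.Z i))^4 / 2 * Sd))) := hsum
    _ = a * ∑ i, Tx i + b * ∑ i, Tz i
        + ∑ i, (1:ℝ)/2 * (a * b * (((minEig (D.lam i))^2)⁻¹ * (opNorm (D.Z i))^4 / 2 * Sd)) := by
        rw [Finset.sum_add_distrib, Finset.sum_add_distrib, ← Finset.mul_sum, ← Finset.mul_sum]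
    _ ≤ a * ∑ i, Tx i + b * ∑ i, Tz i + D.etabar / 2 * (a * b * sqnorm2 (x - z)) := by
        linarith [hconstsum.trans hfinal]

end S8
/-- For μ ≥ 0, η > η̄ and any (β̃,γ̃), the map
(β,γ) ↦ L_{η,μ}((β,γ),(β̃,γ̃)) is strongly convex on ℝ^p × ℝ_+^q with modulus η − η̄,
i.e. subtracting ((η−η̄)/2)‖(β,γ)‖² leaves a convex function. -/
theorem Lrelax_strongly_convex
    {m p q : ℕ} (hm : 0 < m) (hp : 0 < p) (hq : 0 < q)
    (D : LMEData m p q) (hn : ∀ i, 0 < D.n i) (hlam : ∀ i, (D.lam i).PosDef)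
    (μ η : ℝ) (hμ : 0 ≤ μ) (hη : D.etabar < η) (w : Vec p × Vec q) :
    ∀ x ∈ {x : Vec p × Vec q | ∀ j, 0 ≤ x.2 j},
      ∀ z ∈ {x : Vec p × Vec q | ∀ j, 0 ≤ x.2 j},
        ∀ a b : ℝ, 0 ≤ a → 0 ≤ b → a + b = 1 →
          (((D.L (a • x + b • z).1 (a • x + b • z).2 + kappaFun η ((a • x + b • z) - w)
              - (η - D.etabar) / 2 * sqnorm2 (a • x + b • z) : ℝ) : EReal)
            + phiBar μ (a • x + b • z).2)
          ≤ (a : EReal) * (((D.L x.1 x.2 + kappaFun η (x - w)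
                - (η - D.etabar) / 2 * sqnorm2 x : ℝ) : EReal) + phiBar μ x.2)
            + (b : EReal) * (((D.L z.1 z.2 + kappaFun η (z - w)
                - (η - D.etabar) / 2 * sqnorm2 z : ℝ) : EReal) + phiBar μ z.2) := by

  intro x hx z hz a b ha hb hab
  simp only [Set.mem_setOf_eq] at hx hz
  -- the real-valued strong-convexity inequality for the smooth part
  have hΦ : D.L (a • x + b • z).1 (a • x + b • z).2 + kappaFun η ((a • x + b • z) - w)
      - (η - D.etabar)/2 * sqnorm2 (a • x + b • z)
      ≤ a * (D.L x.1 x.2 + kappaFun η (x - w) - (η - D.etabar)/2 * sqnorm2 x)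
        + b * (D.L z.1 z.2 + kappaFun η (z - w) - (η - D.etabar)/2 * sqnorm2 z) := by
    have hL := L_combo D hm hn hlam x z hx hz ha hb hab
    have e2 : sqnorm2 (a • x + b • z)
        = a * sqnorm2 x + b * sqnorm2 z - a*b*sqnorm2 (x - z) := sqnorm2_combo hab x z
    have e1 : sqnorm2 ((a • x + b • z) - w)
        = a * sqnorm2 (x - w) + b * sqnorm2 (z - w) - a*b*sqnorm2 ((x - w) - (z - w)) := by
      rw [combo_sub hab x z w]; exact sqnorm2_combo hab (x - w) (z - w)
    have e3 : (x - w) - (z - w) = x - z := by abel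
    rw [e3] at e1
    simp only [kappaFun]
    rw [e1, e2]
    have expand : a * (D.L x.1 x.2 + η/2 * sqnorm2 (x - w) - (η - D.etabar)/2 * sqnorm2 x)
        + b * (D.L z.1 z.2 + η/2 * sqnorm2 (z - w) - (η - D.etabar)/2 * sqnorm2 z)
        - (D.L (a • x + b • z).1 (a • x + b • z).2
          + η/2 * (a * sqnorm2 (x - w) + b * sqnorm2 (z - w) - a*b*sqnorm2 (x - z))
          - (η - D.etabar)/2 * (a * sqnorm2 x + b * sqnorm2 z - a*b*sqnorm2 (x - z)))
        = (a * D.L x.1 x.2 + b * D.L z.1 z.2 + D.etabar / 2 * (a * b * sqnorm2 (x - z)))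
          - D.L (a • x + b • z).1 (a • x + b • z).2 := by ring
    linarith [hL, expand]
  rcases eq_or_lt_of_le ha with ha0 | hapos
  · have hb1 : b = 1 := by linarith
    rw [← ha0, hb1]
    simp only [zero_smul, one_smul, zero_add]
    rw [EReal.coe_zero, EReal.coe_one, EReal.zero_mul, one_mul, zero_add]
  rcases eq_or_lt_of_le hb with hb0 | hbpos
  · have ha1 : a = 1 := by linarith
    rw [← hb0, ha1]
    simp only [zero_smul, one_smul, add_zero]
    rw [EReal.coe_zero, EReal.coe_one, EReal.zero_mul, one_mul, add_zero]
  by_cases hμ0 : μ = 0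
  · subst hμ0
    have hc2pos : ∀ j, 0 ≤ (a • x + b • z).2 j := by
      intro j
      have hj : (a • x + b • z).2 j = a * x.2 j + b * z.2 j := rfl
      rw [hj]
      have := hx j; have := hz j
      positivity
    rw [phiBar_zero_eval _ hc2pos, phiBar_zero_eval _ hx, phiBar_zero_eval _ hz]
    have hreal : (D.L (a • x + b • z).1 (a • x + b • z).2 + kappaFun η ((a • x + b • z) - w)
        - (η - D.etabar)/2 * sqnorm2 (a • x + b • z)) + (0:ℝ)
        ≤ a * ((D.L x.1 x.2 + kappaFun η (x - w) - (η - D.etabar)/2 * sqnorm2 x) + (0:ℝ))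
          + b * ((D.L z.1 z.2 + kappaFun η (z - w) - (η - D.etabar)/2 * sqnorm2 z) + (0:ℝ)) := by
      nlinarith [hΦ]
    exact_mod_cast hreal
  · have hμpos : 0 < μ := lt_of_le_of_ne hμ (Ne.symm hμ0)
    by_cases hxall : ∀ j, 0 < x.2 j
    · by_cases hzall : ∀ j, 0 < z.2 j
      · have hcall : ∀ j, 0 < (a • x + b • z).2 j := by
          intro j
          have hj : (a • x + b • z).2 j = a * x.2 j + b * z.2 j := rfl
          rw [hj]
          exact add_pos_of_pos_of_nonneg (mul_pos hapos (hxall j)) (mul_nonneg hb (hz j))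
        rw [phiBar_pos_eval hμpos _ hcall, phiBar_pos_eval hμpos _ hxall,
          phiBar_pos_eval hμpos _ hzall]
        have hbar := barrier_combo hμpos x.2 z.2 hxall hzall ha hb hab
        have hsumeq : ∑ j, Real.log ((a • x + b • z).2 j / μ)
            = ∑ j, Real.log ((a * x.2 j + b * z.2 j) / μ) :=
          Finset.sum_congr rfl fun j _ => rfl
        have hbar' : (-μ) * ∑ j, Real.log ((a • x + b • z).2 j / μ)
            ≤ a * ((-μ) * ∑ j, Real.log (x.2 j / μ))
              + b * ((-μ) * ∑ j, Real.log (z.2 j / μ)) := by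
          rw [hsumeq]; exact hbar
        have hreal : (D.L (a • x + b • z).1 (a • x + b • z).2 + kappaFun η ((a • x + b • z) - w)
            - (η - D.etabar)/2 * sqnorm2 (a • x + b • z))
            + ((-μ) * ∑ j, Real.log ((a • x + b • z).2 j / μ))
            ≤ a * ((D.L x.1 x.2 + kappaFun η (x - w) - (η - D.etabar)/2 * sqnorm2 x)
                + ((-μ) * ∑ j, Real.log (x.2 j / μ)))
              + b * ((D.L z.1 z.2 + kappaFun η (z - w) - (η - D.etabar)/2 * sqnorm2 z)
                + ((-μ) * ∑ j, Real.log (z.2 j / μ))) := by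
          nlinarith [hΦ, hbar']
        exact_mod_cast hreal
      · -- some coordinate of z.2 vanishes : RHS = ⊤
        rw [phiBar_pos_top hμpos _ hzall]
        rw [EReal.add_top_of_ne_bot (EReal.coe_ne_bot _), EReal.coe_mul_top_of_pos hbpos]
        rw [EReal.add_top_of_ne_bot (ereal_mul_nonneg_ne_bot ha (fun hbot =>
          (EReal.add_eq_bot_iff.mp hbot).elim (fun h => EReal.coe_ne_bot _ h)
            (fun h => phiBar_ne_bot μ x.2 h)))]
        exact le_top
    · -- some coordinate of x.2 vanishes : RHS = ⊤
      rw [phiBar_pos_top hμpos _ hxall]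
      rw [EReal.add_top_of_ne_bot (EReal.coe_ne_bot _), EReal.coe_mul_top_of_pos hapos]
      rw [EReal.top_add_of_ne_bot (ereal_mul_nonneg_ne_bot hb (fun hbot =>
        (EReal.add_eq_bot_iff.mp hbot).elim (fun h => EReal.coe_ne_bot _ h)
          (fun h => phiBar_ne_bot μ z.2 h)))]
      exact le_top
end
end
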